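/- arXiv:1811.11734 — 12 statements merged into one kernel-verified Lean document; each statement's English description precedes it below -/
import Mathlib

section
/- Let (T,c) be an algebraic tree (c : T³ → T satisfying symmetry, the 2-point condition c(x,y,y)=y, the 3-point condition c(x,y,c(x,y,z))=c(x,y,z), and the 4-point condition c(x₁,x₂,x₃) ∈ {c(x₁,x₂,x₄), c(x₁,x₃,x₄), c(x₂,x₃,x₄)}). If c(x₁,x₂,x₃)=c(x₁,x₂,x₄), then c(x₁,x₃,x₄)=c(x₂,x₃,x₄). -/
variable {T : Type*}

/-- An algebraic tree: a symmetric branch point map satisfying the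
2-point, 3-point and 4-point conditions (BPM1)–(BPM4). -/
def IsAlgTree (c : T → T → T → T) : Prop :=
  (∀ x y z, c x y z = c y x z) ∧
  (∀ x y z, c x y z = c x z y) ∧
  (∀ x y, c x y y = y) ∧
  (∀ x y z, c x y (c x y z) = c x y z) ∧
  (∀ x₁ x₂ x₃ x₄, c x₁ x₂ x₃ = c x₁ x₂ x₄ ∨ c x₁ x₂ x₃ = c x₁ x₃ x₄ ∨
    c x₁ x₂ x₃ = c x₂ x₃ x₄)

/-- The interval `[x,y] = {w : c(x,y,w) = w}`. -/
def interval (c : T → T → T → T) (x y : T) : Set T := {w | c x y w = w}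

theorem stmt_0 [Nonempty T] (c : T → T → T → T) (hc : IsAlgTree c)
    (x₁ x₂ x₃ x₄ : T) (h : c x₁ x₂ x₃ = c x₁ x₂ x₄) :
    c x₁ x₃ x₄ = c x₂ x₃ x₄ := by
  obtain ⟨s1, s2, -, -, h4⟩ := hc
  have A := h4 x₁ x₃ x₄ x₂
  have B := h4 x₂ x₃ x₄ x₁
  have e1 : c x₁ x₃ x₂ = c x₁ x₂ x₃ := by rw [s2]
  have e2 : c x₁ x₄ x₂ = c x₁ x₂ x₄ := by rw [s2]
  have e3 : c x₂ x₃ x₁ = c x₁ x₂ x₃ := by rw [s2, s1, s2]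
  have e4 : c x₂ x₄ x₁ = c x₁ x₂ x₄ := by rw [s2, s1, s2]
  have e5 : c x₃ x₄ x₂ = c x₂ x₃ x₄ := by rw [s1, s2, s1, s2]
  have e6 : c x₃ x₄ x₁ = c x₁ x₃ x₄ := by rw [s1, s2, s1, s2]
  rw [e1, e2, e5] at A
  rw [e3, e4, e6] at B
  rcases A with A | A | A <;> rcases B with B | B | B <;>
    first | exact A | exact B.symm | (rw [A, B]; first | rfl | exact h | exact h.symm) | rw [A, B, h] | rw [A, B, ← h]
end

section
/- Let (T,c) be an algebraic tree with intervals [x,y] := {w : c(x,y,w)=w}. Then for all x,y,z ∈ T, [x,y] ∩ [y,z] = [c(x,y,z), y]. -/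
variable {T : Type*}

theorem stmt_3 [Nonempty T] (c : T → T → T → T) (hc : IsAlgTree c)
    (x y z : T) :
    interval c x y ∩ interval c y z = interval c (c x y z) y := by
  obtain ⟨s1, s2, h2, h3, h4⟩ := hc
  -- rotation symmetry: c a b d = c b d a
  have rot : ∀ a b d, c a b d = c b d a := fun a b d => by rw [s1, s2]
  -- the median lies in the other two intervals as well
  have med2 : ∀ a b d, c a d (c a b d) = c a b d := fun a b d => by
    rw [s2 a b d]; exact h3 a d b
  have med3 : ∀ a b d, c b d (c a b d) = c a b d := fun a b d => by
    rw [rot a b d]; exact h3 b d a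
  -- interval transitivity: v ∈ [x,y], w ∈ [v,y] ⇒ w ∈ [x,y]
  have L1 : ∀ x y v w : T, c x y v = v → c v y w = w → c x y w = w := by
    intro x y v w hA hB
    rcases h4 x y w v with b1 | b2 | b3
    · -- c x y w = c x y v = v
      rw [hA] at b1
      have hvw : v = w := by
        have := med3 x y w  -- c y w (c x y w) = c x y w
        rw [b1] at this    -- c y w v = v
        rw [← this, ← rot v y w, hB]
      rw [b1, hvw]
    · -- c x y w = c x w v =: s
      set s := c x w v with hs
      have hxys : c x y s = s := by have := h3 x y w; rwa [b2] at this
      have hyws : c y w s = s := by have := med3 x y w; rwa [b2] at this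
      have hs' : s = c x v w := by rw [hs, s2]
      have hvws : c v w s = s := by have := med3 x v w; rwa [← hs'] at this
      have hxvs : c x v s = s := by have := h3 x v w; rwa [← hs'] at this
      rcases h4 v y w s with c1 | c2 | c3
      · -- c v y w = c v y s, so w = c v y s
        rw [hB] at c1
        rcases h4 v y s x with d1 | d2 | d3
        · -- c v y s = c v y x = v, so w = v
          have : c v y x = v := by rw [rot v y x, s1, hA]
          rw [d1, this] at c1
          -- w = v ; then s = c x w v = c x v v = v
          have : s = v := by rw [hs, ← c1, h2]
          rw [b2, this, ← c1]
        · rw [d2, ← rot x v s, hxvs] at c1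
          rw [b2, ← c1]
        · rw [d3, ← rot x y s, hxys] at c1
          rw [b2, ← c1]
      · rw [hB, hvws] at c2; rw [b2, ← c2]
      · rw [hB, hyws] at c3; rw [b2, ← c3]
    · -- c x y w = c y w v = c v y w = w
      rw [b3, ← rot v y w, hB]
  -- betweenness: m ∈ [x,w], w ∈ [x,y] ⇒ w ∈ [m,y]
  have L2 : ∀ x y w m : T, c x w m = m → c x y w = w → c m y w = w := by
    intro x y w m hm hw
    rcases h4 x y w m with b1 | b2 | b3
    · -- w = c x y m ; median trick gives c x m w = w, but c x m w = c x w m = m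
      rw [hw] at b1
      have h1 : c x m w = w := by
        have := med2 x y m  -- c x m (c x y m) = c x y m
        rwa [← b1] at this
      have hwm : w = m := by rw [← h1, s2, hm]
      rw [hwm, s1, h2]
    · rw [hw, hm] at b2
      rw [b2, s1, h2]
    · rw [hw] at b3
      rw [rot m y w, ← b3]
  ext w
  simp only [Set.mem_inter_iff, interval, Set.mem_setOf_eq]
  constructor
  · rintro ⟨h1', h2'⟩
    rcases h4 x y z w with e1 | e2 | e3
    · -- c x y z = c x y w = w
      rw [h1'] at e1
      rw [e1, s1, h2]
    · -- c x y z = c x z w ; so c x w (c x y z) = c x y z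
      have hm : c x w (c x y z) = c x y z := by
        have := med2 x z w  -- c x w (c x z w) = c x z w
        rwa [← e2] at this
      exact L2 x y w (c x y z) hm h1'
    · rw [h2'] at e3
      rw [e3, s1, h2]
  · intro h
    refine ⟨L1 x y (c x y z) w (h3 x y z) h, ?_⟩
    have hm : c z y (c x y z) = c x y z := by rw [s1, med3 x y z]
    have := L1 z y (c x y z) w hm h
    rwa [s1] at this
end

section
/- Let (T,c) be an algebraic tree. Then for all x,y,z ∈ T, [x,y] ∪ [y,z] = [x,z] ∪ [c(x,y,z), y], and moreover [x,z] and [c(x,y,z), y] \ {c(x,y,z)} are disjoint. -/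
variable {T : Type*}

section Aux

variable {c : T → T → T → T}

lemma AT.s12 (hc : IsAlgTree c) (x y z : T) : c x y z = c y x z := hc.1 x y z
lemma AT.s23 (hc : IsAlgTree c) (x y z : T) : c x y z = c x z y := hc.2.1 x y z
lemma AT.deg (hc : IsAlgTree c) (x y : T) : c x y y = y := hc.2.2.1 x y
lemma AT.idem (hc : IsAlgTree c) (x y z : T) : c x y (c x y z) = c x y z :=
  hc.2.2.2.1 x y z
lemma AT.fp (hc : IsAlgTree c) (x₁ x₂ x₃ x₄ : T) :
    c x₁ x₂ x₃ = c x₁ x₂ x₄ ∨ c x₁ x₂ x₃ = c x₁ x₃ x₄ ∨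
      c x₁ x₂ x₃ = c x₂ x₃ x₄ := hc.2.2.2.2 x₁ x₂ x₃ x₄

/-- cyclic permutation -/
lemma AT.cyc (hc : IsAlgTree c) (x y z : T) : c x y z = c y z x := by
  rw [AT.s12 hc x y z, AT.s23 hc y x z]

lemma AT.l0 (hc : IsAlgTree c) (x y : T) : c x y x = x := by
  rw [AT.s12 hc x y x, AT.deg hc y x]

/-- idempotence trick: `c (c x y w) y w = c x y w`. -/
lemma AT.k1 (hc : IsAlgTree c) (x y w : T) : c (c x y w) y w = c x y w :=
  calc c (c x y w) y w = c y w (c x y w) := AT.cyc hc _ y w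
    _ = c y w (c y w x) := by rw [AT.cyc hc x y w]
    _ = c y w x := AT.idem hc y w x
    _ = c x y w := (AT.cyc hc x y w).symm

/-- median uniqueness -/
lemma AT.mu (hc : IsAlgTree c) {x y z w : T} (h1 : c x y w = w)
    (h2 : c x z w = w) (h3 : c y z w = w) : w = c x y z := by
  rcases AT.fp hc x y z w with h | h | h
  · rw [h, h1]
  · rw [h, h2]
  · rw [h, h3]

/-- helper: if `c x y w = u` and `c u y w = w` then `w = u`. -/
lemma AT.trick (hc : IsAlgTree c) {x y w u : T} (h3 : c x y w = u)
    (h2 : c u y w = w) : w = u := by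
  have : c u y w = u := by rw [← h3, AT.k1 hc]
  rw [← h2, this]

/-- extension: `u ∈ [x,y]` implies `[u,y] ⊆ [x,y]`. -/
lemma AT.ext (hc : IsAlgTree c) {x y u w : T} (hu : c x y u = u)
    (hw : c u y w = w) : c x y w = w := by
  rcases AT.fp hc x u y w with h | h | h
  · -- c x u y = c x u w, and c x u y = u
    have h' : c x u w = u := by rw [← h, AT.s23 hc, hu]
    rcases AT.fp hc x y w u with h2 | h2 | h2
    · -- c x y w = c x y u = u
      rw [hu] at h2
      have := AT.trick hc h2 hw
      rw [this, hu]
    · -- c x y w = c x w u = c x u w = u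
      rw [AT.s23 hc x w u, h'] at h2
      have := AT.trick hc h2 hw
      rw [this, hu]
    · -- c x y w = c y w u = c u y w = w
      rw [h2, ← AT.cyc hc u y w, hw]
  · -- c x u y = c x y w, LHS = c x y u = u
    have h2 : c x y w = u := by rw [← h, AT.s23 hc, hu]
    have := AT.trick hc h2 hw
    rw [this, hu]
  · -- c x u y = c u y w = w, LHS = u
    have : u = w := by rw [← hw, ← h, AT.s23 hc, hu]
    rw [← this, hu]

/-- intersection lemma: `[x,y] ∩ [y,z] ⊆ [c x y z, y]`. -/
lemma AT.inter (hc : IsAlgTree c) {x y z w : T} (h1 : c x y w = w)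
    (h2 : c y z w = w) : c (c x y z) y w = w := by
  rcases AT.fp hc x z w y with h | h | h
  · -- c x z w = c x z y = c x y z
    have hm : c x z w = c x y z := by rw [h, AT.s23 hc x z y]
    -- then c x w (c x y z) = c x y z
    have hxwm : c x w (c x y z) = c x y z := by
      rw [← hm, AT.s23 hc x z w, AT.idem hc]
    rcases AT.fp hc x y w (c x y z) with h3 | h3 | h3
    · rw [h1, AT.idem hc] at h3
      rw [h3, AT.l0 hc]
    · rw [h1, hxwm] at h3
      rw [h3, AT.l0 hc]
    · rw [h1] at h3
      rw [AT.cyc hc (c x y z) y w, ← h3]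
  · -- c x z w = c x w y = c x y w = w
    have hw : c x z w = w := by rw [h, AT.s23 hc x w y, h1]
    have := AT.mu hc h1 hw h2
    rw [← this, AT.l0 hc]
  · -- c x z w = c z w y = c y z w? c z w y = c z y w = c y z w = w
    have hw : c x z w = w := by
      rw [h, AT.s23 hc z w y, AT.s12 hc z y w, h2]
    have := AT.mu hc h1 hw h2
    rw [← this, AT.l0 hc]

end Aux

theorem stmt_5 [Nonempty T] (c : T → T → T → T) (hc : IsAlgTree c)
    (x y z : T) :
    interval c x y ∪ interval c y z
      = interval c x z ∪ interval c (c x y z) y ∧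
    Disjoint (interval c x z) (interval c (c x y z) y \ {c x y z}) := by
  have hmxy : c x y (c x y z) = c x y z := AT.idem hc x y z
  have hmyz : c y z (c x y z) = c x y z := by
    rw [AT.cyc hc x y z, AT.idem hc]
  have hmxz : c x z (c x y z) = c x y z := by
    rw [AT.s23 hc x y z, AT.idem hc, AT.s23 hc x z y]
  constructor
  · ext w
    simp only [interval, Set.mem_union, Set.mem_setOf_eq]
    constructor
    · rintro (hw | hw)
      · -- w ∈ [x,y]
        rcases AT.fp hc x y w z with h | h | h
        · -- c x y w = c x y z, so w = c x y z
          rw [hw] at h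
          right; rw [← h, AT.l0 hc]
        · -- w = c x w z = c x z w
          left; rw [AT.s23 hc x z w, ← h, hw]
        · -- w = c y w z, so c y z w = w
          rw [hw] at h
          have h2 : c y z w = w := by rw [AT.s23 hc y z w, ← h]
          right; exact AT.inter hc hw h2
      · -- w ∈ [y,z]
        rcases AT.fp hc z y w x with h | h | h
        · -- c z y w = c z y x; LHS = c y z w = w; RHS = c x y z
          rw [AT.s12 hc z y w, hw] at h
          have : w = c x y z := by
            rw [h, AT.s12 hc z y x, AT.s23 hc y z x, AT.cyc hc y x z,
              AT.s12 hc x z y, AT.s23 hc z x y, AT.s12 hc z y x]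
            rw [AT.cyc hc x y z, AT.s12 hc y z x, AT.s23 hc z y x,
              AT.s12 hc z x y]
          right; rw [← this, AT.l0 hc]
        · -- w = c z w x = c x z w
          rw [AT.s12 hc z y w, hw] at h
          left
          rw [AT.cyc hc x z w, ← h]
        · -- w = c y w x, so c x y w = w
          rw [AT.s12 hc z y w, hw] at h
          have h1 : c x y w = w := by
            rw [AT.cyc hc x y w, ← h]
          right; exact AT.inter hc h1 hw
    · rintro (hw | hw)
      · -- w ∈ [x,z]
        rcases AT.fp hc x z w y with h | h | h
        · -- w = c x z y = c x y z
          rw [hw] at h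
          left
          rw [h, AT.s23 hc x z y]; exact hmxy
        · -- w = c x w y, c x y w = w
          rw [hw] at h
          left; rw [AT.s23 hc x y w, ← h]
        · -- w = c z w y, c y z w = w
          rw [hw] at h
          right; rw [AT.cyc hc y z w, ← h]
      · -- w ∈ [c x y z, y]
        left; exact AT.ext hc hmxy hw
  · rw [Set.disjoint_left]
    rintro w hw1 ⟨hw2, hw3⟩
    apply hw3
    simp only [Set.mem_singleton_iff]
    -- hw1 : c x z w = w, hw2 : c (c x y z) y w = w
    have h1 : c x y w = w := AT.ext hc hmxy hw2
    have hmzy : c z y (c x y z) = c x y z := by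
      rw [AT.s12 hc z y (c x y z)]; exact hmyz
    have h3 : c y z w = w := by
      rw [AT.s12 hc y z w]
      exact AT.ext hc hmzy hw2
    exact AT.mu hc h1 hw1 h3
end

section
/- Let (T,c) be an algebraic tree. Then for all x,y,z ∈ T, [x,y] ∩ [y,z] ∩ [z,x] = {c(x,y,z)}. -/
variable {T : Type*}

theorem stmt_7 [Nonempty T] (c : T → T → T → T) (hc : IsAlgTree c)
    (x y z : T) :
    interval c x y ∩ interval c y z ∩ interval c z x = {c x y z} := by
  obtain ⟨s1, s2, _, bpm, fp⟩ := hc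
  ext w
  simp only [Set.mem_inter_iff, Set.mem_singleton_iff, interval, Set.mem_setOf_eq]
  constructor
  · rintro ⟨⟨h1, h2⟩, h3⟩
    rcases fp x y z w with h | h | h
    · rw [h, h1]
    · rw [h, s1, h3]
    · rw [h, h2]
  · rintro rfl
    refine ⟨⟨bpm x y z, ?_⟩, ?_⟩
    · have : c x y z = c y z x := by rw [s1, s2]
      rw [this, bpm]
    · have : c x y z = c z x y := by rw [s1 x y z, s2 y x z, s1 y z x, s2 z y x]
      rw [this, bpm]
end

section
/- Let (T,c) be an algebraic tree and ρ ∈ T. Define x ≤_ρ y iff x ∈ [ρ,y], where [ρ,y]={w : c(ρ,y,w)=w}. Then ≤_ρ is a partial order on T, and for all x,y ∈ T the infimum of x and y with respect to ≤_ρ exists and equals c(ρ,x,y). -/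
variable {T : Type*}

theorem stmt_8 [Nonempty T] (c : T → T → T → T) (hc : IsAlgTree c) (ρ : T) :
    (∀ x, x ∈ interval c ρ x) ∧
    (∀ x y, x ∈ interval c ρ y → y ∈ interval c ρ x → x = y) ∧
    (∀ x y z, x ∈ interval c ρ y → y ∈ interval c ρ z → x ∈ interval c ρ z) ∧
    (∀ x y, c ρ x y ∈ interval c ρ x ∧ c ρ x y ∈ interval c ρ y ∧
      ∀ v, v ∈ interval c ρ x → v ∈ interval c ρ y → v ∈ interval c ρ (c ρ x y)) := by
  obtain ⟨s12, s23, two, idem, four⟩ := hc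
  simp only [interval, Set.mem_setOf_eq]
  refine ⟨?_, ?_, ?_, ?_⟩
  · intro x; exact two ρ x
  · -- antisymmetry
    intro x y hx hy
    -- hx : c ρ y x = x, hy : c ρ x y = y
    rw [← hx, s23, hy]
  · -- transitivity
    intro x y z hxy hyz
    -- hxy : c ρ y x = x, hyz : c ρ z y = y
    have hx : c ρ x y = x := (s23 ρ x y).trans hxy
    rcases four ρ x y z with h | h | h
    · have h' : c ρ x z = x := h.symm.trans hx
      rw [s23]; exact h'
    · have hxyeq : x = y := by rw [← hx, h, s23]; exact hyz
      rw [hxyeq]; exact hyz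
    · -- h : c ρ x y = c x y z, so x = c x y z
      rw [hx] at h
      rcases four ρ z x y with h2 | h2 | h2
      · -- h2 : c ρ z x = c ρ z y = y
        rw [hyz] at h2
        have hxz : c ρ x z = y := (s23 ρ x z).trans h2
        have hy : c ρ x y = y := by
          calc c ρ x y = c ρ x (c ρ x z) := by rw [hxz]
          _ = c ρ x z := idem ρ x z
          _ = y := hxz
        rw [hx] at hy
        rw [h2]; exact hy.symm
      · rw [h2]; exact hx
      · rw [h2, s12, s23]; exact h.symm
  · -- infimum
    intro x y
    have hmx : c ρ x (c ρ x y) = c ρ x y := idem ρ x y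
    have hmy : c ρ y (c ρ x y) = c ρ x y := by
      rw [s23 ρ x y]; exact idem ρ y x
    refine ⟨hmx, hmy, ?_⟩
    intro v h1 h2
    -- h1 : c ρ x v = v, h2 : c ρ y v = v; goal : c ρ (c ρ x y) v = v
    set m := c ρ x y with hm
    rcases four ρ x y v with h | h | h
    · rw [h1, ← hm] at h; rw [h]; exact two ρ v
    · rw [h2, ← hm] at h; rw [h]; exact two ρ v
    · -- h : m = c x y v
      rw [← hm] at h
      have hxm : c ρ x m = m := hmx
      have hxvm : c x v m = m := by
        rw [h, s23 x y v, idem]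
      -- goal : c ρ m v = v
      have key : c ρ v m = v ∨ c ρ v m = m := by
        rcases four ρ v m x with h3 | h3 | h3
        · left; rw [h3, s23]; exact h1
        · right; rw [h3, s23 ρ m x]; exact hxm
        · right; rw [h3, s23 v m x, s12 v x m]; exact hxvm
      rcases key with hk | hk
      · rw [s23]; exact hk
      · -- hk : c ρ v m = m; show v = m
        have hvm : v = m := by
          rcases four ρ x v m with h4 | h4 | h4
          · rw [h1] at h4; rw [h4]; exact hxm
          · rw [h1] at h4; rw [h4]; exact hk
          · rw [h1] at h4; rw [h4]; exact hxvm
        rw [hvm, s23]; exact two ρ m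
end

section
/- Let (T,≤) be a partially ordered set with meets (a meet semilattice) such that every initial segment {y : y ≤ x} is totally ordered. Define c(x,y,z) := max{x∧y, y∧z, z∧x}. Then this maximum exists, and (T,c) is an algebraic tree, i.e., c is symmetric and satisfies c(x,y,y)=y, c(x,y,c(x,y,z))=c(x,y,z), and the 4-point condition. -/
variable {T : Type*}

theorem stmt_10 (T : Type*) [Nonempty T] [SemilatticeInf T]
    (htot : ∀ x : T, IsChain (· ≤ ·) {y : T | y ≤ x}) :
    ∃ c : T → T → T → T,
      (∀ x y z : T, IsGreatest {x ⊓ y, y ⊓ z, z ⊓ x} (c x y z)) ∧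
      IsAlgTree c := by
  classical
  -- any two elements below a common element are comparable
  have comp : ∀ {a b x : T}, a ≤ x → b ≤ x → a ≤ b ∨ b ≤ a := by
    intro a b x ha hb
    rcases eq_or_ne a b with rfl | hne
    · exact Or.inl le_rfl
    · exact (htot x) ha hb hne
  -- helper to build IsGreatest for a 3-element set
  have mkG : ∀ (a b d m : T), (m = a ∨ m = b ∨ m = d) → a ≤ m → b ≤ m → d ≤ m →
      IsGreatest ({a, b, d} : Set T) m := by
    intro a b d m hm ha hb hd
    refine ⟨?_, ?_⟩
    · rcases hm with h | h | h <;> simp [h]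
    · rintro w hw
      rcases hw with rfl | rfl | rfl <;> assumption
  -- existence of the maximum of the three pairwise meets
  have hex : ∀ x y z : T, ∃ m, IsGreatest ({x ⊓ y, y ⊓ z, z ⊓ x} : Set T) m := by
    intro x y z
    rcases comp (inf_le_right : x ⊓ y ≤ y) (inf_le_left : y ⊓ z ≤ y) with h1 | h1
    · rcases comp (inf_le_right : y ⊓ z ≤ z) (inf_le_left : z ⊓ x ≤ z) with h2 | h2
      · exact ⟨z ⊓ x, mkG _ _ _ _ (by simp) (h1.trans h2) h2 le_rfl⟩
      · exact ⟨y ⊓ z, mkG _ _ _ _ (by simp) h1 le_rfl h2⟩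
    · rcases comp (inf_le_left : x ⊓ y ≤ x) (inf_le_right : z ⊓ x ≤ x) with h2 | h2
      · exact ⟨z ⊓ x, mkG _ _ _ _ (by simp) h2 (h1.trans h2) le_rfl⟩
      · exact ⟨x ⊓ y, mkG _ _ _ _ (by simp) le_rfl h1 h2⟩
  choose c hG using hex
  have key : ∀ {x y z : T} {m : T}, IsGreatest ({x ⊓ y, y ⊓ z, z ⊓ x} : Set T) m →
      c x y z = m := fun h => (hG _ _ _).unique h
  -- set permutation equalities
  have hset1 : ∀ x y z : T, ({y ⊓ x, x ⊓ z, z ⊓ y} : Set T) = {x ⊓ y, y ⊓ z, z ⊓ x} := by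
    intro x y z; ext w
    simp only [Set.mem_insert_iff, Set.mem_singleton_iff, inf_comm]
    tauto
  have hset2 : ∀ x y z : T, ({x ⊓ z, z ⊓ y, y ⊓ x} : Set T) = {x ⊓ y, y ⊓ z, z ⊓ x} := by
    intro x y z; ext w
    simp only [Set.mem_insert_iff, Set.mem_singleton_iff, inf_comm]
    tauto
  have sym1 : ∀ x y z : T, c x y z = c y x z := by
    intro x y z
    exact key ((hset1 x y z) ▸ hG y x z)
  have sym2 : ∀ x y z : T, c x y z = c x z y := by
    intro x y z
    exact key ((hset2 x y z) ▸ hG x z y)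
  -- 2-point condition
  have bpm2 : ∀ x y : T, c x y y = y := by
    intro x y
    refine key (mkG _ _ _ _ (by simp) inf_le_right ?_ ?_)
    · exact le_of_eq (inf_idem y)
    · exact inf_le_left
  -- 3-point condition
  have bpm3 : ∀ x y z : T, c x y (c x y z) = c x y z := by
    intro x y z
    obtain ⟨hm, hub⟩ := hG x y z
    set m := c x y z with hmdef
    have hxy : x ⊓ y ≤ m := hub (by simp)
    have hyz : y ⊓ z ≤ m := hub (by simp)
    have hzx : z ⊓ x ≤ m := hub (by simp)
    refine key (mkG _ _ _ _ ?_ hxy inf_le_right inf_le_left)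
    rcases hm with h | h | h
    · exact Or.inl h
    · refine Or.inr (Or.inl ?_)
      have : m ≤ y := h ▸ inf_le_left
      exact (inf_eq_right.mpr this).symm
    · refine Or.inr (Or.inr ?_)
      have : m ≤ x := h ▸ inf_le_right
      exact (inf_eq_left.mpr this).symm
  -- core lemma for the 4-point condition (case m12 maximal, m12 ≤ m14)
  have coreB : ∀ x1 x2 x3 x4 : T,
      x1 ⊓ x3 ≤ x1 ⊓ x2 → x2 ⊓ x3 ≤ x1 ⊓ x2 → x1 ⊓ x2 ≤ x1 ⊓ x4 →
      x1 ⊓ x2 = c x1 x2 x4 ∨ x1 ⊓ x2 = c x1 x3 x4 ∨ x1 ⊓ x2 = c x2 x3 x4 := by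
    intro x1 x2 x3 x4 h13 h23 h14
    have hm24 : x1 ⊓ x2 ≤ x2 ⊓ x4 := le_inf inf_le_right (h14.trans inf_le_right)
    rcases comp (inf_le_right : x1 ⊓ x4 ≤ x4) (inf_le_right : x2 ⊓ x4 ≤ x4) with hc | hc
    · -- x1⊓x4 ≤ x2⊓x4, so x1⊓x4 = x1⊓x2
      have h14eq : x1 ⊓ x4 = x1 ⊓ x2 :=
        le_antisymm (le_inf inf_le_left (hc.trans inf_le_left)) h14
      rcases comp (inf_le_right : x3 ⊓ x4 ≤ x4) (inf_le_right : x2 ⊓ x4 ≤ x4) with hd | hd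
      · -- x3⊓x4 ≤ x2⊓x4 ⇒ x3⊓x4 ≤ x2⊓x3 ≤ x1⊓x2, conclude via c x1 x3 x4
        have h34le : x3 ⊓ x4 ≤ x1 ⊓ x2 :=
          (le_inf (hd.trans inf_le_left) inf_le_left).trans h23
        refine Or.inr (Or.inl (key (mkG _ _ _ _ ?_ h13 h34le
          (le_of_eq ((inf_comm x4 x1).trans h14eq)))).symm)
        exact Or.inr (Or.inr ((inf_comm x4 x1).trans h14eq).symm)
      · -- x2⊓x4 ≤ x3⊓x4 ⇒ x2⊓x4 = x1⊓x2, all three meets of (1,2,4) equal x1⊓x2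
        have h24eq : x2 ⊓ x4 = x1 ⊓ x2 :=
          le_antisymm ((le_inf inf_le_left (hd.trans inf_le_left)).trans h23) hm24
        refine Or.inl (key (mkG _ _ _ _ (Or.inl rfl) le_rfl
          (le_of_eq h24eq) (le_of_eq ((inf_comm x4 x1).trans h14eq)))).symm
    · -- x2⊓x4 ≤ x1⊓x4, so x2⊓x4 = x1⊓x2
      have h24eq : x2 ⊓ x4 = x1 ⊓ x2 :=
        le_antisymm (le_inf (hc.trans inf_le_left) inf_le_left) hm24
      rcases comp (inf_le_right : x3 ⊓ x4 ≤ x4) (inf_le_right : x1 ⊓ x4 ≤ x4) with hd | hd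
      · -- x3⊓x4 ≤ x1⊓x4 ⇒ x3⊓x4 ≤ x1⊓x3 ≤ x1⊓x2, conclude via c x2 x3 x4
        have h34le : x3 ⊓ x4 ≤ x1 ⊓ x2 :=
          (le_inf (hd.trans inf_le_left) inf_le_left).trans h13
        refine Or.inr (Or.inr (key (mkG _ _ _ _ ?_ h23 h34le ?_)).symm)
        · exact Or.inr (Or.inr ((inf_comm x4 x2).trans h24eq).symm)
        · exact le_of_eq ((inf_comm x4 x2).trans h24eq)
      · -- x1⊓x4 ≤ x3⊓x4 ⇒ x1⊓x4 ≤ x1⊓x3 ≤ x1⊓x2, so x1⊓x4 = x1⊓x2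
        have h14eq : x1 ⊓ x4 = x1 ⊓ x2 :=
          le_antisymm ((le_inf inf_le_left (hd.trans inf_le_left)).trans h13) h14
        refine Or.inl (key (mkG _ _ _ _ (Or.inl rfl) le_rfl
          (le_of_eq h24eq) (le_of_eq ((inf_comm x4 x1).trans h14eq)))).symm
  -- core lemma: if x1⊓x2 is the maximum of the triple (x1,x2,x3)
  have core : ∀ x1 x2 x3 x4 : T,
      x1 ⊓ x3 ≤ x1 ⊓ x2 → x2 ⊓ x3 ≤ x1 ⊓ x2 →
      x1 ⊓ x2 = c x1 x2 x4 ∨ x1 ⊓ x2 = c x1 x3 x4 ∨ x1 ⊓ x2 = c x2 x3 x4 := by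
    intro x1 x2 x3 x4 h13 h23
    rcases comp (inf_le_left : x1 ⊓ x4 ≤ x1) (inf_le_left : x1 ⊓ x2 ≤ x1) with hA | hA
    · rcases comp (inf_le_left : x2 ⊓ x4 ≤ x2) (inf_le_right : x1 ⊓ x2 ≤ x2) with hB | hB
      · -- both x1⊓x4, x2⊓x4 ≤ x1⊓x2 : c x1 x2 x4 = x1⊓x2
        exact Or.inl (key (mkG _ _ _ _ (Or.inl rfl) le_rfl hB
          ((inf_comm x4 x1).trans_le hA))).symm
      · -- x1⊓x2 ≤ x2⊓x4 : apply coreB with x1, x2 swapped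
        have h := coreB x2 x1 x3 x4 (by rw [inf_comm x2 x1]; exact h23)
          (by rw [inf_comm x2 x1]; exact h13) (by rw [inf_comm x2 x1]; exact hB)
        rw [inf_comm x2 x1] at h
        rcases h with h | h | h
        · exact Or.inl (h.trans (sym1 x2 x1 x4))
        · exact Or.inr (Or.inr h)
        · exact Or.inr (Or.inl h)
    · -- x1⊓x2 ≤ x1⊓x4 : coreB directly
      exact coreB x1 x2 x3 x4 h13 h23 hA
  -- 4-point condition
  have bpm4 : ∀ x1 x2 x3 x4 : T, c x1 x2 x3 = c x1 x2 x4 ∨ c x1 x2 x3 = c x1 x3 x4 ∨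
      c x1 x2 x3 = c x2 x3 x4 := by
    intro x1 x2 x3 x4
    obtain ⟨hm, hub⟩ := hG x1 x2 x3
    have h12 : x1 ⊓ x2 ≤ c x1 x2 x3 := hub (by simp)
    have h23 : x2 ⊓ x3 ≤ c x1 x2 x3 := hub (by simp)
    have h31 : x3 ⊓ x1 ≤ c x1 x2 x3 := hub (by simp)
    rcases hm with h | h | h
    · -- max is x1⊓x2
      rw [h] at h23 h31 ⊢
      exact core x1 x2 x3 x4 ((inf_comm x1 x3).trans_le h31) h23
    · -- max is x2⊓x3
      rw [h] at h12 h31 ⊢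
      have := core x2 x3 x1 x4 ((inf_comm x2 x1).trans_le h12) h31
      rcases this with h' | h' | h'
      · exact Or.inr (Or.inr h')
      · exact Or.inl (h'.trans (sym1 x2 x1 x4))
      · exact Or.inr (Or.inl (h'.trans (sym1 x3 x1 x4)))
    · -- max is x3⊓x1
      rw [h] at h12 h23 ⊢
      have := core x3 x1 x2 x4 ((inf_comm x3 x2).trans_le h23) h12
      rcases this with h' | h' | h'
      · exact Or.inr (Or.inl (h'.trans (sym1 x3 x1 x4)))
      · exact Or.inr (Or.inr (h'.trans (sym1 x3 x2 x4)))
      · exact Or.inl h'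
  exact ⟨c, hG, sym1, sym2, bpm2, bpm3, bpm4⟩
end

section
/- Let (T,c) and (T',c') be algebraic trees and f : T → T'. Then the following are equivalent: (1) f is a tree homomorphism, i.e., f(c(x,y,z)) = c'(f(x),f(y),f(z)) for all x,y,z; (2) for every ρ ∈ T, f is order preserving from (T, ≤_ρ) to (T', ≤_{f(ρ)}); (3) f([x,y]) ⊆ [f(x),f(y)] for all x,y ∈ T. -/
variable {T : Type*}

lemma algTree_mem_xy {c : T → T → T → T} (h : IsAlgTree c) (x y z : T) :
    c x y z ∈ interval c x y := h.2.2.2.1 x y z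

lemma algTree_mem_yz {c : T → T → T → T} (h : IsAlgTree c) (x y z : T) :
    c x y z ∈ interval c y z := by
  have e : c x y z = c y z x := by rw [h.1 x y z, h.2.1 y x z]
  show c y z (c x y z) = c x y z
  rw [e]; exact h.2.2.2.1 y z x

lemma algTree_mem_xz {c : T → T → T → T} (h : IsAlgTree c) (x y z : T) :
    c x y z ∈ interval c x z := by
  have e : c x y z = c x z y := h.2.1 x y z
  show c x z (c x y z) = c x y z
  rw [e]; exact h.2.2.2.1 x z y

lemma algTree_unique {c : T → T → T → T} (h : IsAlgTree c) {x y z w : T}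
    (h1 : w ∈ interval c x y) (h2 : w ∈ interval c y z) (h3 : w ∈ interval c x z) :
    c x y z = w := by
  rcases h.2.2.2.2 x y z w with h4 | h4 | h4
  · rw [h4]; exact h1
  · rw [h4]; exact h3
  · rw [h4]; exact h2

theorem stmt_13 {T' : Type*} [Nonempty T] [Nonempty T']
    (c : T → T → T → T) (c' : T' → T' → T' → T')
    (hc : IsAlgTree c) (hc' : IsAlgTree c') (f : T → T') :
    ((∀ x y z, f (c x y z) = c' (f x) (f y) (f z)) ↔
      (∀ ρ x y : T, x ∈ interval c ρ y → f x ∈ interval c' (f ρ) (f y))) ∧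
    ((∀ x y z, f (c x y z) = c' (f x) (f y) (f z)) ↔
      (∀ x y : T, f '' interval c x y ⊆ interval c' (f x) (f y))) := by
  have fwd : (∀ x y z, f (c x y z) = c' (f x) (f y) (f z)) →
      ∀ ρ x y : T, x ∈ interval c ρ y → f x ∈ interval c' (f ρ) (f y) := by
    intro hf ρ x y hx
    show c' (f ρ) (f y) (f x) = f x
    rw [← hf, hx]
  have bwd : (∀ ρ x y : T, x ∈ interval c ρ y → f x ∈ interval c' (f ρ) (f y)) →
      ∀ x y z, f (c x y z) = c' (f x) (f y) (f z) := by
    intro hf x y z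
    exact (algTree_unique hc'
      (hf x (c x y z) y (algTree_mem_xy hc x y z))
      (hf y (c x y z) z (algTree_mem_yz hc x y z))
      (hf x (c x y z) z (algTree_mem_xz hc x y z))).symm
  constructor
  · exact ⟨fwd, bwd⟩
  · constructor
    · intro hf x y w hw
      obtain ⟨a, ha, rfl⟩ := hw
      exact fwd hf x a y ha
    · intro hf
      apply bwd
      intro ρ x y hx
      exact hf ρ y ⟨x, hx, rfl⟩
end

section
/- Let (T,c) be an algebraic tree, equipped with the topology τ generated by the components S_x(y) := {z ∈ T \ {x} : c(x,y,z) ≠ x} for x ≠ y. Then τ is a Hausdorff topology. -/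
variable {T : Type*}

/-- The component `S_x(y)` of `T \ {x}` containing `y`. -/
def component (c : T → T → T → T) (x y : T) : Set T := {z | z ≠ x ∧ c x y z ≠ x}

/-- The component topology, generated by the components `S_x(y)`, `x ≠ y`. -/
def componentTopology (c : T → T → T → T) : TopologicalSpace T :=
  TopologicalSpace.generateFrom {S | ∃ x y, x ≠ y ∧ S = component c x y}

theorem stmt_15 [Nonempty T] (c : T → T → T → T) (hc : IsAlgTree c) :
    @T2Space T (componentTopology c) := by
  obtain ⟨h12, h23, hyy, hproj, h4⟩ := hc
  letI : TopologicalSpace T := componentTopology c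
  have hopen : ∀ a b : T, a ≠ b → IsOpen (component c a b) := fun a b hab =>
    TopologicalSpace.GenerateOpen.basic _ ⟨a, b, hab, rfl⟩
  have sym3 : ∀ x y z, c x y z = c y z x := fun x y z => (h12 x y z).trans (h23 y x z)
  -- transitivity-style lemma for components
  have htrans : ∀ m x y z, c m x y = m → c m x z ≠ m → c m y z = m := by
    intro m x y z hxy hxz
    rcases h4 m x y z with h | h | h
    · exact absurd (h.symm.trans hxy) hxz
    · exact h ▸ hxy
    · -- h : c m x y = c x y z
      have hm : c y z x = m := by rw [← sym3, ← h, hxy]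
      calc c m y z = c y z m := sym3 m y z
        _ = c y z (c y z x) := by rw [hm]
        _ = c y z x := hproj y z x
        _ = m := hm
  constructor
  intro x y hxy
  by_cases hmid : ∃ z, c x y z ≠ x ∧ c x y z ≠ y
  · obtain ⟨z, hzx, hzy⟩ := hmid
    set m := c x y z with hmdef
    have hm : c x y m = m := hproj x y z
    have hmxy : c m x y = m := (sym3 m x y).trans hm
    refine ⟨component c m x, component c m y, hopen m x hzx, hopen m y hzy,
      ⟨hzx.symm, ?_⟩, ⟨hzy.symm, ?_⟩, ?_⟩
    · rw [hyy m x]; exact hzx.symm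
    · rw [hyy m y]; exact hzy.symm
    · rw [Set.disjoint_left]
      rintro w ⟨hw1, hw2⟩ ⟨hw3, hw4⟩
      exact hw4 (htrans m x y w hmxy hw2)
  · push_neg at hmid
    refine ⟨component c y x, component c x y, hopen y x (Ne.symm hxy), hopen x y hxy,
      ⟨hxy, ?_⟩, ⟨Ne.symm hxy, ?_⟩, ?_⟩
    · rw [hyy y x]; exact hxy
    · rw [hyy x y]; exact Ne.symm hxy
    · rw [Set.disjoint_left]
      rintro w ⟨hw1, hw2⟩ ⟨hw3, hw4⟩
      rcases eq_or_ne (c x y w) x with h | h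
      · exact hw4 h
      · exact hw2 ((h12 y x w) ▸ hmid w h)
end

section
/- Let (T,c) be an algebraic tree with component topology τ. Then every interval [x,y] = {z : c(x,y,z)=z} is closed in τ. -/
variable {T : Type*}

theorem stmt_16 [Nonempty T] (c : T → T → T → T) (hc : IsAlgTree c) (x y : T) :
    @IsClosed T (componentTopology c) (interval c x y) := by
  obtain ⟨hs1, hs2, h2, h3, h4⟩ := hc
  -- full symmetry helper: rotate arguments
  have hrot : ∀ a b e : T, c a b e = c b e a := fun a b e =>
    (hs1 a b e).trans (hs2 b a e)
  -- key lemma: if w ∈ [x,y] then c (c x y z) z w = c x y z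
  have key : ∀ z w : T, c x y w = w → c (c x y z) z w = c x y z := by
    intro z w hw
    rcases h4 x y z w with h | h | h
    · -- c x y z = c x y w = w
      rw [hw] at h
      rw [h, hrot, h2]
    · -- c x y z = c x z w
      calc c (c x y z) z w = c z w (c x y z) := hrot _ _ _
        _ = c z w (c z w x) := by rw [h, hrot x z w]
        _ = c z w x := h3 _ _ _
        _ = c x y z := by rw [← hrot x z w, ← h]
    · -- c x y z = c y z w
      calc c (c x y z) z w = c z w (c x y z) := hrot _ _ _
        _ = c z w (c z w y) := by rw [h, hrot y z w]
        _ = c z w y := h3 _ _ _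
        _ = c x y z := by rw [← hrot y z w, ← h]
  letI : TopologicalSpace T := componentTopology c
  rw [← isOpen_compl_iff]
  have hset : (interval c x y)ᶜ =
      ⋃ z ∈ {z : T | c x y z ≠ z}, component c (c x y z) z := by
    ext w
    simp only [Set.mem_compl_iff, interval, component, Set.mem_setOf_eq,
      Set.mem_iUnion, exists_prop]
    constructor
    · intro hw
      exact ⟨w, hw, fun h => hw h.symm, by rw [h2]; exact fun h => hw h.symm⟩
    · rintro ⟨z, hz, hwm, hcw⟩ hw
      exact hcw (key z w hw)
  rw [hset]
  refine isOpen_biUnion fun z hz => ?_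
  exact TopologicalSpace.GenerateOpen.basic _ ⟨c x y z, z, hz, rfl⟩
end

section
/- Let (T,c) be an algebraic tree with component topology τ. Then the branch point map c : T³ → T is continuous (with T³ carrying the product topology). -/
set_option maxHeartbeats 1000000

variable {T : Type*}

section helpers

lemma sA (c : T → T → T → T) (hc : IsAlgTree c) (a b z : T) : c a b z = c b a z := hc.1 a b z

lemma sB (c : T → T → T → T) (hc : IsAlgTree c) (a b z : T) : c a b z = c a z b := hc.2.1 a b z

lemma sC (c : T → T → T → T) (hc : IsAlgTree c) (a b z : T) : c a b z = c z a b :=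
  (hc.2.1 a b z).trans (hc.1 z a b).symm

lemma sD (c : T → T → T → T) (hc : IsAlgTree c) (a b z : T) : c a b z = c b z a :=
  (hc.1 a b z).trans (hc.2.1 b a z)

lemma sE (c : T → T → T → T) (hc : IsAlgTree c) (a b z : T) : c a b z = c z b a :=
  ((hc.1 a b z).trans (hc.2.1 b a z)).trans (hc.1 b z a)

lemma hE2 (c : T → T → T → T) (hc : IsAlgTree c) (a b : T) : c a b a = a :=
  (hc.1 a b a).trans (hc.2.2.1 b a)

lemma hE3 (c : T → T → T → T) (hc : IsAlgTree c) (a b : T) : c a a b = a :=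
  (hc.2.1 a a b).trans (hE2 c hc a b)

lemma keyA (c : T → T → T → T) (hc : IsAlgTree c) (x y u v p : T)
    (h1 : c x y u = x) (h2 : c x y v = x) (h3 : c u v p = p) : c x y p = x := by
  have hE := hc.2.2.1
  have hI := hc.2.2.2.1
  have hF := hc.2.2.2.2
  rcases hF x y u v with k1 | k1 | k1
  ·
    rcases hF u v p x with k2 | k2 | k2
    ·
      rcases hF x y u p with k3 | k3 | k3
      ·
        clear hc hE hI hF
        grind
      ·
        have e4_0 : c p u x = c u x p := sD c hc p u x
        have e4_1 : c p u x = c x u p := sE c hc p u x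
        have e4_2 : c p y (c p y u) = c p y u := hI p y u
        have e4_3 : c u v x = c u x v := sB c hc u v x
        have e4_4 : c u x (c u x v) = c u x v := hI u x v
        clear hc hE hI hF
        grind
      ·
        have e4_0 : c p u y = c p y u := sB c hc p u y
        have e4_1 : c p u y = c y u p := sE c hc p u y
        have e4_2 : c p y (c p y u) = c p y u := hI p y u
        have e4_3 : c p x y = c p y x := sB c hc p x y
        have e4_4 : c p x y = c x y p := sD c hc p x y
        clear hc hE hI hF
        grind
    ·
      rcases hF x y u p with k3 | k3 | k3
      ·
        clear hc hE hI hF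
        grind
      ·
        have e4_0 : c p u x = c u p x := sA c hc p u x
        have e4_1 : c p u x = c x u p := sE c hc p u x
        have e4_2 : c p y (c p y u) = c p y u := hI p y u
        clear hc hE hI hF
        grind
      ·
        have e4_0 : c p u x = c u p x := sA c hc p u x
        have e4_1 : c p u y = c y u p := sE c hc p u y
        have e4_2 : c p u (c p u y) = c p u y := hI p u y
        have e4_3 : c p y (c p y u) = c p y u := hI p y u
        clear hc hE hI hF
        grind
    ·
      rcases hF x y v p with k3 | k3 | k3
      ·
        clear hc hE hI hF
        grind
      ·
        have e4_0 : c p y (c p y u) = c p y u := hI p y u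
        have e4_1 : c p v x = c v p x := sA c hc p v x
        have e4_2 : c p v x = c x v p := sE c hc p v x
        clear hc hE hI hF
        grind
      ·
        have e4_0 : c p y (c p y u) = c p y u := hI p y u
        have e4_1 : c p v x = c v p x := sA c hc p v x
        have e4_2 : c p v y = c y v p := sE c hc p v y
        have e4_3 : c p v (c p v y) = c p v y := hI p v y
        clear hc hE hI hF
        grind
  ·
    rcases hF y u v x with k2 | k2 | k2
    ·
      rcases hF y u v p with k3 | k3 | k3
      ·
        have e4_0 : c p u y = c p y u := sB c hc p u y
        have e4_1 : c p u y = c y u p := sE c hc p u y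
        have e4_2 : c p y (c p y u) = c p y u := hI p y u
        have e4_3 : c p x y = c p y x := sB c hc p x y
        have e4_4 : c p x y = c x y p := sD c hc p x y
        have e4_5 : c u x y = c y u x := sC c hc u x y
        have e4_6 : c u x y = c x y u := sD c hc u x y
        clear hc hE hI hF
        grind
      ·
        have e4_0 : c p v y = c p y v := sB c hc p v y
        have e4_1 : c p v y = c y v p := sE c hc p v y
        have e4_2 : c p y (c p y v) = c p y v := hI p y v
        have e4_3 : c p x y = c p y x := sB c hc p x y
        have e4_4 : c p x y = c x y p := sD c hc p x y
        have e4_5 : c u x y = c y u x := sC c hc u x y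
        have e4_6 : c u x y = c x y u := sD c hc u x y
        clear hc hE hI hF
        grind
      ·
        have e4_0 : c p y (c p y u) = c p y u := hI p y u
        have e4_1 : c u x y = c y u x := sC c hc u x y
        have e4_2 : c u x y = c x y u := sD c hc u x y
        clear hc hE hI hF
        grind
    ·
      rcases hF y u v p with k3 | k3 | k3
      ·
        have e4_0 : c p u y = c p y u := sB c hc p u y
        have e4_1 : c p u y = c y u p := sE c hc p u y
        have e4_2 : c p y (c p y u) = c p y u := hI p y u
        have e4_3 : c p x y = c p y x := sB c hc p x y
        have e4_4 : c p x y = c x y p := sD c hc p x y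
        have e4_5 : c v x y = c y v x := sC c hc v x y
        have e4_6 : c v x y = c x y v := sD c hc v x y
        clear hc hE hI hF
        grind
      ·
        have e4_0 : c p v y = c p y v := sB c hc p v y
        have e4_1 : c p v y = c y v p := sE c hc p v y
        have e4_2 : c p y (c p y v) = c p y v := hI p y v
        have e4_3 : c p x y = c p y x := sB c hc p x y
        have e4_4 : c p x y = c x y p := sD c hc p x y
        have e4_5 : c v x y = c y v x := sC c hc v x y
        have e4_6 : c v x y = c x y v := sD c hc v x y
        clear hc hE hI hF
        grind
      ·
        have e4_0 : c p y (c p y u) = c p y u := hI p y u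
        have e4_1 : c v x y = c y v x := sC c hc v x y
        have e4_2 : c v x y = c x y v := sD c hc v x y
        clear hc hE hI hF
        grind
    ·
      rcases hF y u v p with k3 | k3 | k3
      ·
        have e4_0 : c p u y = c p y u := sB c hc p u y
        have e4_1 : c p u y = c y u p := sE c hc p u y
        have e4_2 : c p y (c p y u) = c p y u := hI p y u
        have e4_3 : c p x y = c p y x := sB c hc p x y
        have e4_4 : c p x y = c x y p := sD c hc p x y
        have e4_5 : c u v x = c x u v := sC c hc u v x
        clear hc hE hI hF
        grind
      ·
        have e4_0 : c p v y = c p y v := sB c hc p v y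
        have e4_1 : c p v y = c y v p := sE c hc p v y
        have e4_2 : c p y (c p y v) = c p y v := hI p y v
        have e4_3 : c p x y = c p y x := sB c hc p x y
        have e4_4 : c p x y = c x y p := sD c hc p x y
        have e4_5 : c u v x = c x u v := sC c hc u v x
        clear hc hE hI hF
        grind
      ·
        have e4_0 : c p y (c p y u) = c p y u := hI p y u
        have e4_1 : c u v x = c x u v := sC c hc u v x
        clear hc hE hI hF
        grind
  ·
    rcases hF x y u v with k2 | k2 | k2
    ·
      rcases hF y u v p with k3 | k3 | k3
      ·
        have e4_0 : c p u y = c p y u := sB c hc p u y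
        have e4_1 : c p u y = c y u p := sE c hc p u y
        have e4_2 : c p y (c p y u) = c p y u := hI p y u
        have e4_3 : c p x y = c p y x := sB c hc p x y
        have e4_4 : c p x y = c x y p := sD c hc p x y
        clear hc hE hI hF
        grind
      ·
        have e4_0 : c p v y = c p y v := sB c hc p v y
        have e4_1 : c p v y = c y v p := sE c hc p v y
        have e4_2 : c p y (c p y v) = c p y v := hI p y v
        have e4_3 : c p x y = c p y x := sB c hc p x y
        have e4_4 : c p x y = c x y p := sD c hc p x y
        clear hc hE hI hF
        grind
      ·
        have e4_0 : c p y (c p y u) = c p y u := hI p y u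
        clear hc hE hI hF
        grind
    ·
      rcases hF y u v p with k3 | k3 | k3
      ·
        have e4_0 : c p u y = c p y u := sB c hc p u y
        have e4_1 : c p u y = c y u p := sE c hc p u y
        have e4_2 : c p y (c p y u) = c p y u := hI p y u
        have e4_3 : c p x y = c p y x := sB c hc p x y
        have e4_4 : c p x y = c x y p := sD c hc p x y
        clear hc hE hI hF
        grind
      ·
        have e4_0 : c p v y = c p y v := sB c hc p v y
        have e4_1 : c p v y = c y v p := sE c hc p v y
        have e4_2 : c p y (c p y v) = c p y v := hI p y v
        have e4_3 : c p x y = c p y x := sB c hc p x y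
        have e4_4 : c p x y = c x y p := sD c hc p x y
        clear hc hE hI hF
        grind
      ·
        have e4_0 : c p y (c p y u) = c p y u := hI p y u
        clear hc hE hI hF
        grind
    ·
      rcases hF y u v p with k3 | k3 | k3
      ·
        have e4_0 : c p u y = c p y u := sB c hc p u y
        have e4_1 : c p u y = c y u p := sE c hc p u y
        have e4_2 : c p y (c p y u) = c p y u := hI p y u
        have e4_3 : c p x y = c p y x := sB c hc p x y
        have e4_4 : c p x y = c x y p := sD c hc p x y
        clear hc hE hI hF
        grind
      ·
        have e4_0 : c p v y = c p y v := sB c hc p v y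
        have e4_1 : c p v y = c y v p := sE c hc p v y
        have e4_2 : c p y (c p y v) = c p y v := hI p y v
        have e4_3 : c p x y = c p y x := sB c hc p x y
        have e4_4 : c p x y = c x y p := sD c hc p x y
        clear hc hE hI hF
        grind
      ·
        have e4_0 : c p y (c p y u) = c p y u := hI p y u
        clear hc hE hI hF
        grind

lemma keyB (c : T → T → T → T) (hc : IsAlgTree c) (x y u v p : T)
    (h3 : c u v p = p) (hu : c x y u ≠ x) (hv : c x y v ≠ x) : c x y p ≠ x := by
  intro hp
  have hE := hc.2.2.1
  have hI := hc.2.2.2.1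
  have hF := hc.2.2.2.2
  rcases hF x y u p with k1 | k1 | k1
  ·
    exact hu (by clear hc hE hI hF hu hv; grind)
  ·
    rcases hF x y u v with k2 | k2 | k2
    ·
      rcases hF x y p u with k3 | k3 | k3
      ·
        exact hu (by clear hc hE hI hF hu hv; grind)
      ·
        have e4_0 : c p u x = c x p u := sC c hc p u x
        have e4_1 : c p u x = c x u p := sE c hc p u x
        exact hu (by clear hc hE hI hF hu hv; grind)
      ·
        have e4_0 : c p u x = c x u p := sE c hc p u x
        have e4_1 : c p u y = c y p u := sC c hc p u y
        have e4_2 : c p u (c p u y) = c p u y := hI p u y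
        exact hu (by clear hc hE hI hF hu hv; grind)
    ·
      rcases hF x y p u with k3 | k3 | k3
      ·
        exact hu (by clear hc hE hI hF hu hv; grind)
      ·
        have e4_0 : c p u x = c x p u := sC c hc p u x
        have e4_1 : c p u x = c x u p := sE c hc p u x
        exact hu (by clear hc hE hI hF hu hv; grind)
      ·
        have e4_0 : c p u x = c x u p := sE c hc p u x
        have e4_1 : c p u y = c y p u := sC c hc p u y
        have e4_2 : c p u (c p u y) = c p u y := hI p u y
        exact hu (by clear hc hE hI hF hu hv; grind)
    ·
      rcases hF x y p u with k3 | k3 | k3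
      ·
        exact hu (by clear hc hE hI hF hu hv; grind)
      ·
        have e4_0 : c p u x = c x p u := sC c hc p u x
        have e4_1 : c p u x = c x u p := sE c hc p u x
        exact hu (by clear hc hE hI hF hu hv; grind)
      ·
        have e4_0 : c p u x = c x u p := sE c hc p u x
        have e4_1 : c p u y = c y p u := sC c hc p u y
        have e4_2 : c p u (c p u y) = c p u y := hI p u y
        exact hu (by clear hc hE hI hF hu hv; grind)
  ·
    rcases hF x y v p with k2 | k2 | k2
    ·
      exact hv (by clear hc hE hI hF hu hv; grind)
    ·
      rcases hF x y p v with k3 | k3 | k3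
      ·
        exact hv (by clear hc hE hI hF hu hv; grind)
      ·
        have e4_0 : c p v x = c x p v := sC c hc p v x
        have e4_1 : c p v x = c x v p := sE c hc p v x
        exact hv (by clear hc hE hI hF hu hv; grind)
      ·
        have e4_0 : c p v x = c x v p := sE c hc p v x
        have e4_1 : c p v y = c y p v := sC c hc p v y
        have e4_2 : c p v (c p v y) = c p v y := hI p v y
        exact hv (by clear hc hE hI hF hu hv; grind)
    ·
      rcases hF u v p y with k3 | k3 | k3
      ·
        have e4_0 : c p u y = c u y p := sD c hc p u y
        have e4_1 : c p u y = c y u p := sE c hc p u y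
        have e4_2 : c u v y = c u y v := sB c hc u v y
        have e4_3 : c u y (c u y v) = c u y v := hI u y v
        have e4_4 : c x y (c x y u) = c x y u := hI x y u
        exact hu (by clear hc hE hI hF hu hv; grind)
      ·
        have e4_0 : c p u y = c u p y := sA c hc p u y
        have e4_1 : c p u y = c y u p := sE c hc p u y
        have e4_2 : c x y (c x y u) = c x y u := hI x y u
        exact hu (by clear hc hE hI hF hu hv; grind)
      ·
        have e4_0 : c p v y = c v p y := sA c hc p v y
        have e4_1 : c p v y = c y v p := sE c hc p v y
        have e4_2 : c x y (c x y v) = c x y v := hI x y v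
        exact hv (by clear hc hE hI hF hu hv; grind)

lemma mem_char (c : T → T → T → T) (hc : IsAlgTree c) (x y u v w : T) :
    c x y (c u v w) ≠ x ↔
      ((c x y u ≠ x ∧ c x y v ≠ x) ∨ (c x y u ≠ x ∧ c x y w ≠ x) ∨
        (c x y v ≠ x ∧ c x y w ≠ x)) := by
  have hI := hc.2.2.2.1
  have m3uv : c u v (c u v w) = c u v w := hI u v w
  have m3uw : c u w (c u v w) = c u v w := by
    rw [hc.2.1 u v w]; exact hI u w v
  have m3vw : c v w (c u v w) = c u v w := by
    rw [sD c hc u v w]; exact hI v w u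
  constructor
  · intro h
    by_cases hu : c x y u = x <;> by_cases hv : c x y v = x <;> by_cases hw : c x y w = x
    · exact absurd (keyA c hc x y u v _ hu hv m3uv) h
    · exact absurd (keyA c hc x y u v _ hu hv m3uv) h
    · exact absurd (keyA c hc x y u w _ hu hw m3uw) h
    · tauto
    · exact absurd (keyA c hc x y v w _ hv hw m3vw) h
    · tauto
    · tauto
    · tauto
  · rintro (⟨h1, h2⟩ | ⟨h1, h2⟩ | ⟨h1, h2⟩)
    · exact keyB c hc x y u v _ m3uv h1 h2
    · exact keyB c hc x y u w _ m3uw h1 h2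
    · exact keyB c hc x y v w _ m3vw h1 h2

lemma mem_comp (c : T → T → T → T) (hc : IsAlgTree c) (x y z : T) :
    z ∈ component c x y ↔ c x y z ≠ x := by
  constructor
  · exact fun h => h.2
  · intro h
    refine ⟨fun hz => h ?_, h⟩
    rw [hz]; exact hE2 c hc x y

end helpers

theorem stmt_17 [Nonempty T] (c : T → T → T → T) (hc : IsAlgTree c) :
    letI : TopologicalSpace T := componentTopology c
    Continuous (fun p : T × T × T => c p.1 p.2.1 p.2.2) := by
  letI : TopologicalSpace T := componentTopology c
  show Continuous (fun p : T × T × T => c p.1 p.2.1 p.2.2)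
  have hco : Continuous fun z : T => z := continuous_id
  apply continuous_generateFrom_iff.mpr
  rintro S ⟨a, b, hab, rfl⟩
  have hSopen : IsOpen (component c a b) :=
    TopologicalSpace.GenerateOpen.basic _ ⟨a, b, hab, rfl⟩
  have c1 : Continuous fun p : T × T × T => p.1 := continuous_fst
  have c2 : Continuous fun p : T × T × T => p.2.1 := continuous_fst.comp continuous_snd
  have c3 : Continuous fun p : T × T × T => p.2.2 := continuous_snd.comp continuous_snd
  have h1 := hSopen.preimage c1
  have h2 := hSopen.preimage c2
  have h3 := hSopen.preimage c3
  have hset : (fun p : T × T × T => c p.1 p.2.1 p.2.2) ⁻¹' component c a b =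
      (((fun p : T × T × T => p.1) ⁻¹' component c a b ∩
          (fun p : T × T × T => p.2.1) ⁻¹' component c a b) ∪
        ((fun p : T × T × T => p.1) ⁻¹' component c a b ∩
          (fun p : T × T × T => p.2.2) ⁻¹' component c a b) ∪
        ((fun p : T × T × T => p.2.1) ⁻¹' component c a b ∩
          (fun p : T × T × T => p.2.2) ⁻¹' component c a b)) := by
    ext ⟨u, v, w⟩
    simp only [Set.mem_preimage, Set.mem_union, Set.mem_inter_iff,
      mem_comp c hc]
    rw [mem_char c hc]
    tauto
  rw [hset]
  exact ((h1.inter h2).union (h1.inter h3)).union (h2.inter h3)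
end

section
/- Let (T,r) be a metric space satisfying the 4-point condition r(x₁,x₂)+r(x₃,x₄) ≤ max{r(x₁,x₃)+r(x₂,x₄), r(x₁,x₄)+r(x₂,x₃)} and admitting all branch points: for all x₁,x₂,x₃ there is a (unique) point c(x₁,x₂,x₃) lying on all three metric intervals [xᵢ,xⱼ] = {z : r(xᵢ,z)+r(z,xⱼ)=r(xᵢ,xⱼ)}. Then the branch point map c satisfies the axioms of an algebraic tree: it is symmetric, c(x,y,y)=y, c(x,y,c(x,y,z))=c(x,y,z), and c(x₁,x₂,x₃) ∈ {c(x₁,x₂,x₄), c(x₁,x₃,x₄), c(x₂,x₃,x₄)} for all x₁,x₂,x₃,x₄. -/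
variable {T : Type*}

section Aux

variable [MetricSpace T]

/-- Uniqueness of the median point. -/
lemma med_unique
    (h4pt : ∀ x₁ x₂ x₃ x₄ : T, dist x₁ x₂ + dist x₃ x₄ ≤
      max (dist x₁ x₃ + dist x₂ x₄) (dist x₁ x₄ + dist x₂ x₃))
    {x y z p q : T}
    (hp1 : dist x p + dist p y = dist x y) (hp2 : dist x p + dist p z = dist x z)
    (hp3 : dist y p + dist p z = dist y z)
    (hq1 : dist x q + dist q y = dist x y) (hq2 : dist x q + dist q z = dist x z)
    (hq3 : dist y q + dist q z = dist y z) : p = q := by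
  have hxp : dist x p = dist x q := by
    linarith [dist_comm p y, dist_comm q y]
  have hle : dist p q ≤ 0 := by
    rcases le_max_iff.mp (h4pt x y p q) with h' | h' <;>
      linarith [dist_comm p y, dist_comm q y, dist_comm y p, dist_comm y q]
  exact dist_eq_zero.mp (le_antisymm hle dist_nonneg)

lemma swap_third
    (h4pt : ∀ x₁ x₂ x₃ x₄ : T, dist x₁ x₂ + dist x₃ x₄ ≤
      max (dist x₁ x₃ + dist x₂ x₄) (dist x₁ x₄ + dist x₂ x₃))
    (c : T → T → T → T)
    (hbp : ∀ x y z : T,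
      dist x (c x y z) + dist (c x y z) y = dist x y ∧
      dist x (c x y z) + dist (c x y z) z = dist x z ∧
      dist y (c x y z) + dist (c x y z) z = dist y z)
    (a b u v : T) (h : dist a v + dist b u = dist a u + dist b v) :
    c a b u = c a b v := by
  obtain ⟨e1, e2, e3⟩ := hbp a b u
  obtain ⟨f1, f2, f3⟩ := hbp a b v
  set m := c a b u with hm
  have tri1 := dist_triangle a m v
  have tri2 := dist_triangle b m v
  have hle : dist m v ≤ (dist a v + dist b v - dist a b) / 2 := by
    rcases le_max_iff.mp (h4pt m v a b) with h' | h' <;>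
      linarith [dist_comm m a, dist_comm m b, dist_comm v a, dist_comm v b,
        dist_comm a m, dist_comm b m]
  have g1 : dist a m + dist m v = dist a v := by
    linarith [dist_comm m b]
  have g2 : dist b m + dist m v = dist b v := by
    linarith [dist_comm m b, dist_comm b m]
  exact med_unique h4pt e1 g1 g2 f1 f2 f3

end Aux

theorem stmt_18 (T : Type*) [MetricSpace T] [Nonempty T]
    (h4pt : ∀ x₁ x₂ x₃ x₄ : T, dist x₁ x₂ + dist x₃ x₄ ≤
      max (dist x₁ x₃ + dist x₂ x₄) (dist x₁ x₄ + dist x₂ x₃))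
    (c : T → T → T → T)
    (hbp : ∀ x y z : T,
      dist x (c x y z) + dist (c x y z) y = dist x y ∧
      dist x (c x y z) + dist (c x y z) z = dist x z ∧
      dist y (c x y z) + dist (c x y z) z = dist y z) :
    IsAlgTree c := by
  have sym1 : ∀ x y z : T, c x y z = c y x z := by
    intro x y z
    obtain ⟨a1, a2, a3⟩ := hbp x y z
    obtain ⟨b1, b2, b3⟩ := hbp y x z
    exact med_unique h4pt a1 a2 a3
      (by linarith [dist_comm x (c y x z), dist_comm (c y x z) y, dist_comm x y,
        dist_comm (c y x z) x, dist_comm y (c y x z)]) b3 b2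
  have sym2 : ∀ x y z : T, c x y z = c x z y := by
    intro x y z
    obtain ⟨a1, a2, a3⟩ := hbp x y z
    obtain ⟨b1, b2, b3⟩ := hbp x z y
    exact med_unique h4pt a1 a2 a3 b2 b1
      (by linarith [dist_comm z (c x z y), dist_comm (c x z y) z, dist_comm z y,
        dist_comm (c x z y) y, dist_comm y (c x z y)])
  refine ⟨sym1, sym2, ?_, ?_, ?_⟩
  · intro x y
    obtain ⟨a1, a2, a3⟩ := hbp x y y
    have h0 : dist (c x y y) y = 0 := by
      have hs : dist y y = 0 := dist_self y
      linarith [dist_comm y (c x y y)]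
    exact dist_eq_zero.mp h0
  · intro x y z
    obtain ⟨a1, a2, a3⟩ := hbp x y z
    obtain ⟨p1, p2, p3⟩ := hbp x y (c x y z)
    exact med_unique h4pt p1 p2 p3 a1 (by simp) (by simp)
  · intro x₁ x₂ x₃ x₄
    have h1 := h4pt x₁ x₂ x₃ x₄
    have h2 := h4pt x₁ x₃ x₂ x₄
    have h3 := h4pt x₁ x₄ x₂ x₃
    rw [dist_comm x₃ x₂] at h2
    rw [dist_comm x₄ x₃, dist_comm x₄ x₂] at h3
    have L : dist x₁ x₃ + dist x₂ x₄ = dist x₁ x₄ + dist x₂ x₃ →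
        c x₁ x₂ x₃ = c x₁ x₂ x₄ ∨ c x₁ x₂ x₃ = c x₁ x₃ x₄ ∨ c x₁ x₂ x₃ = c x₂ x₃ x₄ :=
      fun he => Or.inl (swap_third h4pt c hbp x₁ x₂ x₃ x₄ (by linarith))
    have M : dist x₁ x₂ + dist x₃ x₄ = dist x₁ x₄ + dist x₂ x₃ →
        c x₁ x₂ x₃ = c x₁ x₂ x₄ ∨ c x₁ x₂ x₃ = c x₁ x₃ x₄ ∨ c x₁ x₂ x₃ = c x₂ x₃ x₄ :=
      fun he => Or.inr (Or.inl ((sym2 x₁ x₂ x₃).trans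
        (swap_third h4pt c hbp x₁ x₃ x₂ x₄ (by linarith [dist_comm x₃ x₂, dist_comm x₂ x₃]))))
    have R : dist x₁ x₂ + dist x₃ x₄ = dist x₁ x₃ + dist x₂ x₄ →
        c x₁ x₂ x₃ = c x₁ x₂ x₄ ∨ c x₁ x₂ x₃ = c x₁ x₃ x₄ ∨ c x₁ x₂ x₃ = c x₂ x₃ x₄ :=
      fun he => Or.inr (Or.inr (((sym1 x₁ x₂ x₃).trans (sym2 x₂ x₁ x₃)).trans
        (swap_third h4pt c hbp x₂ x₃ x₁ x₄
          (by linarith [dist_comm x₃ x₁, dist_comm x₂ x₁, dist_comm x₁ x₃, dist_comm x₁ x₂]))))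
    rcases le_max_iff.mp h1 with hA | hB <;> rcases le_max_iff.mp h2 with hC | hD <;>
      rcases le_max_iff.mp h3 with hE | hF <;>
      first
        | exact L (by linarith)
        | exact M (by linarith)
        | exact R (by linarith)
end

section
/- Let (T,c) be an algebraic tree and ν a measure on the Borel σ-algebra of the component topology with ν([x,y]) < ∞ for all x,y. Define r_ν(x,y) := ν([x,y]) − ½ν({x}) − ½ν({y}). Then r_ν is a pseudometric on T; in particular r_ν(x,y) + r_ν(y,z) = r_ν(x,z) + 2 r_ν(c(x,y,z), y) for all x,y,z ∈ T. -/
set_option linter.unusedVariables false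
private lemma algF3 {T : Type*} (c : T → T → T → T)
    (s1 : ∀ a b d : T, c b a d = c a b d) (s2 : ∀ a b d : T, c a d b = c a b d)
    (s3 : ∀ a b d : T, c b d a = c a b d) (s4 : ∀ a b d : T, c d a b = c a b d)
    (s5 : ∀ a b d : T, c d b a = c a b d)
    (hdeg : ∀ a b : T, c a b b = b) (hdeg2 : ∀ a b : T, c a b a = a)
    (hdeg3 : ∀ a b : T, c a a b = a)
    (hid1 : ∀ a b d : T, c a b (c a b d) = c a b d)
    (hid2 : ∀ a b d : T, c a d (c a b d) = c a b d)
    (hid3 : ∀ a b d : T, c b d (c a b d) = c a b d)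
    (h4 : ∀ a b d e : T, c a b d = c a b e ∨ c a b d = c a d e ∨ c a b d = c b d e)
    (x y z v : T)
    (f0 : (c x y z) = v) : (c v x z) = v := by
  rcases h4 y z v x with h0 | h0 | h0
  · rw [s3 v y z] at h0
    rw [s3 x y z] at h0
    rcases h4 y v (c v x z) z with h1 | h1 | h1
    · rw [s1 v y (c v x z)] at h1
      rw [s1 v y z] at h1
      rcases h4 x z v y with h2 | h2 | h2
      · rw [s3 v x z] at h2
        rw [s2 x y z] at h2
        rw [h2, f0]
      · rw [s3 v x z] at h2
        rw [s1 v x y] at h2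
        rw [← f0, s4 x z (c x y z), hid2 x y z]
      · rw [s3 v x z] at h2
        rw [s4 v y z] at h2
        rw [← f0, s4 x z (c x y z), hid2 x y z]
    · rw [s1 v y (c v x z)] at h1
      rw [s2 y z (c v x z)] at h1
      rcases h4 x y z (c v x z) with h2 | h2 | h2
      · rcases h4 x z v y with h3 | h3 | h3
        · rw [s3 v x z] at h3
          rw [s2 x y z] at h3
          rw [h3, f0]
        · rw [s3 v x z] at h3
          rw [s1 v x y] at h3
          rw [← f0, s4 x z (c x y z), hid2 x y z]
        · rw [s3 v x z] at h3
          rw [s4 v y z] at h3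
          rw [← f0, s4 x z (c x y z), hid2 x y z]
      · rw [← f0, s4 x z (c x y z), hid2 x y z]
      · rcases h4 z v (c v x z) y with h3 | h3 | h3
        · rw [s1 v z (c v x z)] at h3
          rw [s4 v y z] at h3
          rw [← f0, s4 x z (c x y z), hid2 x y z]
        · rw [s1 v z (c v x z)] at h3
          rw [s3 y z (c v x z)] at h3
          rw [← f0, s4 x z (c x y z), hid2 x y z]
        · rw [s1 v z (c v x z)] at h3
          rw [s2 v y (c v x z)] at h3
          rw [← f0, s4 x z (c x y z), hid2 x y z]
    · rw [s1 v y (c v x z)] at h1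
      rw [s2 v z (c v x z)] at h1
      rcases h4 x y z (c v x z) with h2 | h2 | h2
      · rw [← f0, s4 x z (c x y z), hid2 x y z]
      · rw [← f0, s4 x z (c x y z), hid2 x y z]
      · rw [← f0, s4 x z (c x y z), hid2 x y z]
  · rw [s3 v y z] at h0
    rw [s4 v x y] at h0
    rcases h4 x z v y with h1 | h1 | h1
    · rw [s3 v x z] at h1
      rw [s2 x y z] at h1
      rw [h1, f0]
    · rw [s3 v x z] at h1
      rw [s1 v x y] at h1
      rcases h4 x y z v with h2 | h2 | h2
      · rw [s3 v x y] at h2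
        rw [← f0, s4 x z (c x y z), hid2 x y z]
      · rw [s3 v x z] at h2
        rw [← h2, f0]
      · rw [s3 v y z] at h2
        rw [← f0, s4 x z (c x y z), hid2 x y z]
    · rw [s3 v x z] at h1
      rw [s4 v y z] at h1
      rcases h4 x y z v with h2 | h2 | h2
      · rw [s3 v x y] at h2
        rw [← f0, s4 x z (c x y z), hid2 x y z]
      · rw [s3 v x z] at h2
        rw [← h2, f0]
      · rw [s3 v y z] at h2
        rw [← f0, s4 x z (c x y z), hid2 x y z]
  · rw [s3 v y z] at h0
    rw [s4 v x z] at h0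
    rcases h4 x y v z with h1 | h1 | h1
    · rw [s3 v x y] at h1
      rcases h4 x y z (c v x z) with h2 | h2 | h2
      · rcases h4 x v (c v y z) z with h3 | h3 | h3
        · rw [s1 v x (c v y z)] at h3
          rw [s1 v x z] at h3
          rw [← f0, s4 x z (c x y z), hid2 x y z]
        · rw [s1 v x (c v y z)] at h3
          rw [s2 x z (c v y z)] at h3
          rw [← f0, s4 x z (c x y z), hid2 x y z]
        · rw [s1 v x (c v y z)] at h3
          rw [s2 v z (c v y z)] at h3
          rw [← f0, s4 x z (c x y z), hid2 x y z]
      · rw [← f0, s4 x z (c x y z), hid2 x y z]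
      · rw [← f0, s4 x z (c x y z), hid2 x y z]
    · rw [s3 v x y] at h1
      rw [s1 v x z] at h1
      rcases h4 x y z v with h2 | h2 | h2
      · rw [s3 v x y] at h2
        rw [← f0, s4 x z (c x y z), hid2 x y z]
      · rw [s3 v x z] at h2
        rw [← h2, f0]
      · rw [s3 v y z] at h2
        rw [← f0, s4 x z (c x y z), hid2 x y z]
    · rw [s3 v x y] at h1
      rw [s1 v y z] at h1
      rcases h4 x y z v with h2 | h2 | h2
      · rw [s3 v x y] at h2
        rw [← f0, s4 x z (c x y z), hid2 x y z]
      · rw [s3 v x z] at h2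
        rw [← h2, f0]
      · rw [s3 v y z] at h2
        rw [← f0, s4 x z (c x y z), hid2 x y z]

private lemma algP4fwd {T : Type*} (c : T → T → T → T)
    (s1 : ∀ a b d : T, c b a d = c a b d) (s2 : ∀ a b d : T, c a d b = c a b d)
    (s3 : ∀ a b d : T, c b d a = c a b d) (s4 : ∀ a b d : T, c d a b = c a b d)
    (s5 : ∀ a b d : T, c d b a = c a b d)
    (hdeg : ∀ a b : T, c a b b = b) (hdeg2 : ∀ a b : T, c a b a = a)
    (hdeg3 : ∀ a b : T, c a a b = a)
    (hid1 : ∀ a b d : T, c a b (c a b d) = c a b d)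
    (hid2 : ∀ a b d : T, c a d (c a b d) = c a b d)
    (hid3 : ∀ a b d : T, c b d (c a b d) = c a b d)
    (h4 : ∀ a b d e : T, c a b d = c a b e ∨ c a b d = c a d e ∨ c a b d = c b d e)
    (x y z v w : T)
    (f0 : (c x y z) = v) (f1 : (c w x y) = w) (f2 : (c w y z) = w) : (c v w y) = w := by
  rcases h4 x v w y with h0 | h0 | h0
  · rw [s4 v w x] at h0
    rw [s1 v x y] at h0
    rcases h4 x y w v with h1 | h1 | h1
    · rw [s3 w x y] at h1
      rw [s3 v x y] at h1
      rw [← f1, h1, s2 v y (c v x y), hid2 v x y]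
    · rw [s3 w x y] at h1
      rw [s5 v w x] at h1
      rw [← f1, h1, h0, s2 v y (c v x y), hid2 v x y]
    · rw [s3 w x y] at h1
      rw [s5 v w y] at h1
      rw [← h1, f1]
  · rw [s4 v w x] at h0
    rw [s1 w x y] at h0
    rcases h4 x y z w with h1 | h1 | h1
    · rw [s3 w x y] at h1
      rw [← f0, h1, f1, hdeg3 w y]
    · rw [s3 w x z] at h1
      have g0 := f0
      rw [h1] at g0
      have g18 := h0
      rw [← f0, h1, s4 w x (c w x z)] at g18
      have g63 := f1
      rw [← g18, hid1 w x z, g0] at g63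
      rw [g63, hdeg3 w y]
    · rw [s3 w y z] at h1
      rw [← f0, h1, f2, hdeg3 w y]
  · rw [s4 v w x] at h0
    rcases h4 x y w v with h1 | h1 | h1
    · rw [s3 w x y] at h1
      rw [s3 v x y] at h1
      rw [← f1, h1, s2 v y (c v x y), hid2 v x y]
    · rw [s3 w x y] at h1
      rw [s5 v w x] at h1
      rw [← h0, ← h1, f1]
    · rw [s3 w x y] at h1
      rw [s5 v w y] at h1
      rw [← h1, f1]

private lemma algP4bwd1 {T : Type*} (c : T → T → T → T)
    (s1 : ∀ a b d : T, c b a d = c a b d) (s2 : ∀ a b d : T, c a d b = c a b d)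
    (s3 : ∀ a b d : T, c b d a = c a b d) (s4 : ∀ a b d : T, c d a b = c a b d)
    (s5 : ∀ a b d : T, c d b a = c a b d)
    (hdeg : ∀ a b : T, c a b b = b) (hdeg2 : ∀ a b : T, c a b a = a)
    (hdeg3 : ∀ a b : T, c a a b = a)
    (hid1 : ∀ a b d : T, c a b (c a b d) = c a b d)
    (hid2 : ∀ a b d : T, c a d (c a b d) = c a b d)
    (hid3 : ∀ a b d : T, c b d (c a b d) = c a b d)
    (h4 : ∀ a b d e : T, c a b d = c a b e ∨ c a b d = c a d e ∨ c a b d = c b d e)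
    (x y z v w : T)
    (f0 : (c x y z) = v) (f1 : (c v x z) = v) (f2 : (c v y z) = v) (f3 : (c v x y) = v) (f4 : (c v w y) = w) : (c w x y) = w := by
  rcases h4 x v w y with h0 | h0 | h0
  · rw [s4 v w x] at h0
    rw [s1 v x y] at h0
    rcases h4 y v w x with h1 | h1 | h1
    · rw [s4 v w y] at h1
      rw [s4 v x y] at h1
      rw [← f4, h1, f3, f3]
    · rw [s4 v w y] at h1
      rw [s4 w x y] at h1
      rw [← h1, f4]
    · rw [s4 v w y] at h1
      rw [← f4, h1, h0, f3, f3]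
  · rw [s4 v w x] at h0
    rw [s1 w x y] at h0
    rcases h4 x y z w with h1 | h1 | h1
    · rw [s3 w x y] at h1
      rw [← h1, ← f4, ← f0, h1, s4 w y (c w x y), hid2 w x y]
    · rw [s3 w x z] at h1
      have g19 := f4
      rw [← f0, s4 w y (c x y z)] at g19
      have g49 := h0
      rw [← f0, h1, s4 w x (c w x z), hid1 w x z, ← h1] at g49
      rw [← g49, ← g19, g49, hid2 w x y]
    · rw [s3 w y z] at h1
      have g2 := f0
      rw [← f3] at g2
      have g3 := f0
      rw [h1] at g3
      have g103 := f4
      rw [← g3, s4 w y (c w y z), hid1 w y z] at g103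
      have g176 := h1
      rw [g2, ← g3] at g176
      rw [← g103, g176]
  · rw [s4 v w x] at h0
    rcases h4 x y z w with h1 | h1 | h1
    · rw [s3 w x y] at h1
      rw [← h1, ← f4, ← f0, h1, s4 w y (c w x y), hid2 w x y]
    · rw [s3 w x z] at h1
      have g2 := f0
      rw [← f3] at g2
      have g3 := f0
      rw [h1] at g3
      have g14 := f4
      rw [← h0] at g14
      have g257 := h1
      rw [g2, ← g3] at g257
      have g639 := g14
      rw [← g3, s4 w x (c w x z), hid1 w x z] at g639
      rw [← g639, g257]
    · rw [s3 w y z] at h1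
      have g2 := f0
      rw [← f3] at g2
      have g3 := f0
      rw [h1] at g3
      have g124 := f4
      rw [← g3, s4 w y (c w y z), hid1 w y z] at g124
      have g258 := h1
      rw [g2, ← g3] at g258
      rw [← g124, g258]

private lemma algP4bwd2 {T : Type*} (c : T → T → T → T)
    (s1 : ∀ a b d : T, c b a d = c a b d) (s2 : ∀ a b d : T, c a d b = c a b d)
    (s3 : ∀ a b d : T, c b d a = c a b d) (s4 : ∀ a b d : T, c d a b = c a b d)
    (s5 : ∀ a b d : T, c d b a = c a b d)
    (hdeg : ∀ a b : T, c a b b = b) (hdeg2 : ∀ a b : T, c a b a = a)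
    (hdeg3 : ∀ a b : T, c a a b = a)
    (hid1 : ∀ a b d : T, c a b (c a b d) = c a b d)
    (hid2 : ∀ a b d : T, c a d (c a b d) = c a b d)
    (hid3 : ∀ a b d : T, c b d (c a b d) = c a b d)
    (h4 : ∀ a b d e : T, c a b d = c a b e ∨ c a b d = c a d e ∨ c a b d = c b d e)
    (x y z v w : T)
    (f0 : (c x y z) = v) (f1 : (c v x z) = v) (f2 : (c v y z) = v) (f3 : (c v x y) = v) (f4 : (c v w y) = w) : (c w y z) = w := by
  rcases h4 z v w y with h0 | h0 | h0
  · rw [s4 v w z] at h0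
    rw [s4 v y z] at h0
    rcases h4 y v w z with h1 | h1 | h1
    · rw [s4 v w y] at h1
      rw [s1 v y z] at h1
      rw [← f4, h1, f2, f2]
    · rw [s4 v w y] at h1
      rw [s1 w y z] at h1
      rw [← h1, f4]
    · rw [s4 v w y] at h1
      rw [← f4, h1, h0, f2, f2]
  · rw [s4 v w z] at h0
    rw [s4 w y z] at h0
    rcases h4 y v w z with h1 | h1 | h1
    · rw [s4 v w y] at h1
      rw [s1 v y z] at h1
      rw [← f4, h1, f2, f2]
    · rw [s4 v w y] at h1
      rw [s1 w y z] at h1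
      rw [← h1, f4]
    · rw [s4 v w y] at h1
      rw [← h0, ← h1, f4]
  · rw [s4 v w z] at h0
    rcases h4 x y z w with h1 | h1 | h1
    · rw [s3 w x y] at h1
      have g1 := f0
      rw [← f2] at g1
      have g3 := f0
      rw [h1] at g3
      have g124 := f4
      rw [← g3, s4 w y (c w x y), hid2 w x y] at g124
      have g242 := h1
      rw [g1, ← g3] at g242
      rw [← g124, g242]
    · rw [s3 w x z] at h1
      have g1 := f0
      rw [← f2] at g1
      have g3 := f0
      rw [h1] at g3
      have g14 := f4
      rw [← h0] at g14
      have g241 := h1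
      rw [g1, ← g3] at g241
      have g639 := g14
      rw [← g3, s4 w z (c w x z), hid2 w x z] at g639
      rw [← g639, g241]
    · rw [s3 w y z] at h1
      rw [← h1, ← f4, ← f0, h1, s4 w y (c w y z), hid1 w y z]

private lemma algP5a {T : Type*} (c : T → T → T → T)
    (s1 : ∀ a b d : T, c b a d = c a b d) (s2 : ∀ a b d : T, c a d b = c a b d)
    (s3 : ∀ a b d : T, c b d a = c a b d) (s4 : ∀ a b d : T, c d a b = c a b d)
    (s5 : ∀ a b d : T, c d b a = c a b d)
    (hdeg : ∀ a b : T, c a b b = b) (hdeg2 : ∀ a b : T, c a b a = a)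
    (hdeg3 : ∀ a b : T, c a a b = a)
    (hid1 : ∀ a b d : T, c a b (c a b d) = c a b d)
    (hid2 : ∀ a b d : T, c a d (c a b d) = c a b d)
    (hid3 : ∀ a b d : T, c b d (c a b d) = c a b d)
    (h4 : ∀ a b d e : T, c a b d = c a b e ∨ c a b d = c a d e ∨ c a b d = c b d e)
    (x y z v w : T)
    (f0 : (c x y z) = v) (f1 : (c v x z) = v) (f2 : (c v y z) = v) (f3 : (c v x y) = v) (f4 : (c w x y) = w) : (c w x z) = w ∨ (c v w y) = w := by
  rcases h4 y z w x with h0 | h0 | h0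
  · rw [s3 w y z] at h0
    rw [s3 x y z] at h0
    rcases h4 x z w y with h1 | h1 | h1
    · rw [s3 w x z] at h1
      rw [s2 x y z] at h1
      rcases h4 x y w z with h2 | h2 | h2
      · rw [s3 w x y] at h2
        refine Or.inl ?_
        rw [h1, ← f4, h2]
      · rw [s3 w x y] at h2
        rw [s1 w x z] at h2
        refine Or.inl ?_
        rw [← h2, f4]
      · rw [s3 w x y] at h2
        rw [s1 w y z] at h2
        refine Or.inl ?_
        rw [h1, ← f4, ← h0, h2]
    · rw [s3 w x z] at h1
      rw [s1 w x y] at h1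
      refine Or.inl ?_
      rw [h1, f4]
    · rw [s3 w x z] at h1
      rw [s4 w y z] at h1
      rcases h4 x y w z with h2 | h2 | h2
      · rw [s3 w x y] at h2
        refine Or.inl ?_
        rw [← f4, h2, f0, f1]
      · rw [s3 w x y] at h2
        rw [s1 w x z] at h2
        refine Or.inl ?_
        rw [← h2, f4]
      · rw [s3 w x y] at h2
        rw [s1 w y z] at h2
        refine Or.inl ?_
        rw [h1, ← h2, f4]
  · rw [s3 w y z] at h0
    rw [s4 w x y] at h0
    rcases h4 x v w y with h1 | h1 | h1
    · rw [s4 v w x] at h1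
      rw [s1 v x y] at h1
      rcases h4 x y w v with h2 | h2 | h2
      · rw [s3 w x y] at h2
        rw [s3 v x y] at h2
        refine Or.inl ?_
        rw [← f4, h2, f3, f1]
      · rw [s3 w x y] at h2
        rw [s5 v w x] at h2
        refine Or.inl ?_
        rw [← f4, h2, h1, f3, f1]
      · rw [s3 w x y] at h2
        rw [s5 v w y] at h2
        refine Or.inr ?_
        rw [← h2, f4]
    · rw [s4 v w x] at h1
      rw [s1 w x y] at h1
      rcases h4 x y z w with h2 | h2 | h2
      · rw [s3 w x y] at h2
        refine Or.inl ?_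
        rw [← f4, ← h2, f0, f1]
      · rw [s3 w x z] at h2
        refine Or.inl ?_
        rw [← h2, ← f4, ← h1, ← f0, h2, s4 w x (c w x z), hid1 w x z]
      · rw [s3 w y z] at h2
        refine Or.inl ?_
        rw [← f4, ← h0, ← h2, f0, f1]
    · rw [s4 v w x] at h1
      rcases h4 x y w v with h2 | h2 | h2
      · rw [s3 w x y] at h2
        rw [s3 v x y] at h2
        refine Or.inl ?_
        rw [← f4, h2, f3, f1]
      · rw [s3 w x y] at h2
        rw [s5 v w x] at h2
        refine Or.inr ?_
        rw [← h1, ← h2, f4]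
      · rw [s3 w x y] at h2
        rw [s5 v w y] at h2
        refine Or.inr ?_
        rw [← h2, f4]
  · rw [s3 w y z] at h0
    rw [s4 w x z] at h0
    rcases h4 x y w z with h1 | h1 | h1
    · rw [s3 w x y] at h1
      refine Or.inl ?_
      rw [← f4, h1, f0, f1]
    · rw [s3 w x y] at h1
      rw [s1 w x z] at h1
      refine Or.inl ?_
      rw [← h1, f4]
    · rw [s3 w x y] at h1
      rw [s1 w y z] at h1
      refine Or.inl ?_
      rw [← h0, ← h1, f4]

private lemma algP5b {T : Type*} (c : T → T → T → T)
    (s1 : ∀ a b d : T, c b a d = c a b d) (s2 : ∀ a b d : T, c a d b = c a b d)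
    (s3 : ∀ a b d : T, c b d a = c a b d) (s4 : ∀ a b d : T, c d a b = c a b d)
    (s5 : ∀ a b d : T, c d b a = c a b d)
    (hdeg : ∀ a b : T, c a b b = b) (hdeg2 : ∀ a b : T, c a b a = a)
    (hdeg3 : ∀ a b : T, c a a b = a)
    (hid1 : ∀ a b d : T, c a b (c a b d) = c a b d)
    (hid2 : ∀ a b d : T, c a d (c a b d) = c a b d)
    (hid3 : ∀ a b d : T, c b d (c a b d) = c a b d)
    (h4 : ∀ a b d e : T, c a b d = c a b e ∨ c a b d = c a d e ∨ c a b d = c b d e)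
    (x y z v w : T)
    (f0 : (c x y z) = v) (f1 : (c v x z) = v) (f2 : (c v y z) = v) (f3 : (c v x y) = v) (f4 : (c w y z) = w) : (c w x z) = w ∨ (c v w y) = w := by
  rcases h4 x y w z with h0 | h0 | h0
  · rw [s3 w x y] at h0
    rcases h4 y z w x with h1 | h1 | h1
    · rw [s3 w y z] at h1
      rw [s3 x y z] at h1
      refine Or.inl ?_
      rw [← f4, h1, f0, f1]
    · rw [s3 w y z] at h1
      rw [s4 w x y] at h1
      refine Or.inl ?_
      rw [← f4, h1, h0, f0, f1]
    · rw [s3 w y z] at h1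
      rw [s4 w x z] at h1
      refine Or.inl ?_
      rw [← h1, f4]
  · rw [s3 w x y] at h0
    rw [s1 w x z] at h0
    rcases h4 y z w x with h1 | h1 | h1
    · rw [s3 w y z] at h1
      rw [s3 x y z] at h1
      refine Or.inl ?_
      rw [← f4, h1, f0, f1]
    · rw [s3 w y z] at h1
      rw [s4 w x y] at h1
      refine Or.inl ?_
      rw [← h0, ← h1, f4]
    · rw [s3 w y z] at h1
      rw [s4 w x z] at h1
      refine Or.inl ?_
      rw [← h1, f4]
  · rw [s3 w x y] at h0
    rw [s1 w y z] at h0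
    rcases h4 x v w y with h1 | h1 | h1
    · rw [s4 v w x] at h1
      rw [s1 v x y] at h1
      rcases h4 x y w v with h2 | h2 | h2
      · rw [s3 w x y] at h2
        rw [s3 v x y] at h2
        refine Or.inl ?_
        rw [← f4, ← h0, h2, f3, f1]
      · rw [s3 w x y] at h2
        rw [s5 v w x] at h2
        refine Or.inl ?_
        rw [← f4, ← h0, h2, h1, f3, f1]
      · rw [s3 w x y] at h2
        rw [s5 v w y] at h2
        refine Or.inr ?_
        rw [← h2, h0, f4]
    · rw [s4 v w x] at h1
      rw [s1 w x y] at h1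
      rcases h4 x y z w with h2 | h2 | h2
      · rw [s3 w x y] at h2
        refine Or.inl ?_
        rw [← f4, ← h0, ← h2, f0, f1]
      · rw [s3 w x z] at h2
        refine Or.inl ?_
        rw [← h2, ← f4, ← h0, ← h1, ← f0, h2, s4 w x (c w x z), hid1 w x z]
      · rw [s3 w y z] at h2
        refine Or.inl ?_
        rw [← f4, ← h2, f0, f1]
    · rw [s4 v w x] at h1
      rcases h4 x y w v with h2 | h2 | h2
      · rw [s3 w x y] at h2
        rw [s3 v x y] at h2
        refine Or.inl ?_
        rw [← f4, ← h0, h2, f3, f1]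
      · rw [s3 w x y] at h2
        rw [s5 v w x] at h2
        refine Or.inr ?_
        rw [← h1, ← h2, h0, f4]
      · rw [s3 w x y] at h2
        rw [s5 v w y] at h2
        refine Or.inr ?_
        rw [← h2, h0, f4]

private lemma algP5rev {T : Type*} (c : T → T → T → T)
    (s1 : ∀ a b d : T, c b a d = c a b d) (s2 : ∀ a b d : T, c a d b = c a b d)
    (s3 : ∀ a b d : T, c b d a = c a b d) (s4 : ∀ a b d : T, c d a b = c a b d)
    (s5 : ∀ a b d : T, c d b a = c a b d)
    (hdeg : ∀ a b : T, c a b b = b) (hdeg2 : ∀ a b : T, c a b a = a)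
    (hdeg3 : ∀ a b : T, c a a b = a)
    (hid1 : ∀ a b d : T, c a b (c a b d) = c a b d)
    (hid2 : ∀ a b d : T, c a d (c a b d) = c a b d)
    (hid3 : ∀ a b d : T, c b d (c a b d) = c a b d)
    (h4 : ∀ a b d e : T, c a b d = c a b e ∨ c a b d = c a d e ∨ c a b d = c b d e)
    (x y z v w : T)
    (f0 : (c x y z) = v) (f1 : (c v x z) = v) (f2 : (c v y z) = v) (f3 : (c v x y) = v) (f4 : (c w x z) = w) : (c w x y) = w ∨ (c w y z) = w := by
  rcases h4 x z w y with h0 | h0 | h0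
  · rw [s3 w x z] at h0
    rw [s2 x y z] at h0
    refine Or.inl ?_
    rw [← f4, h0, f0, f3]
  · rw [s3 w x z] at h0
    rw [s1 w x y] at h0
    refine Or.inl ?_
    rw [← h0, f4]
  · rw [s3 w x z] at h0
    rw [s4 w y z] at h0
    refine Or.inr ?_
    rw [← h0, f4]

private lemma algP6 {T : Type*} (c : T → T → T → T)
    (s1 : ∀ a b d : T, c b a d = c a b d) (s2 : ∀ a b d : T, c a d b = c a b d)
    (s3 : ∀ a b d : T, c b d a = c a b d) (s4 : ∀ a b d : T, c d a b = c a b d)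
    (s5 : ∀ a b d : T, c d b a = c a b d)
    (hdeg : ∀ a b : T, c a b b = b) (hdeg2 : ∀ a b : T, c a b a = a)
    (hdeg3 : ∀ a b : T, c a a b = a)
    (hid1 : ∀ a b d : T, c a b (c a b d) = c a b d)
    (hid2 : ∀ a b d : T, c a d (c a b d) = c a b d)
    (hid3 : ∀ a b d : T, c b d (c a b d) = c a b d)
    (h4 : ∀ a b d e : T, c a b d = c a b e ∨ c a b d = c a d e ∨ c a b d = c b d e)
    (x y z v w : T)
    (f0 : (c x y z) = v) (f1 : (c v x z) = v) (f2 : (c v y z) = v) (f3 : (c v x y) = v) (f4 : (c w x z) = w) (f5 : (c v w y) = w) : w = v := by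
  rcases h4 x y z w with h0 | h0 | h0
  · rw [s3 w x y] at h0
    have g3 := f0
    rw [h0] at g3
    have g20 := f5
    rw [← f0, h0, s4 w y (c w x y)] at g20
    rw [← g20, hid2 w x y, g3]
  · rw [s3 w x z] at h0
    rw [← f0, ← f4, h0]
  · rw [s3 w y z] at h0
    have g3 := f0
    rw [h0] at g3
    have g20 := f5
    rw [← f0, h0, s4 w y (c w y z)] at g20
    rw [← g20, hid1 w y z, g3]

private lemma algP7 {T : Type*} (c : T → T → T → T)
    (s1 : ∀ a b d : T, c b a d = c a b d) (s2 : ∀ a b d : T, c a d b = c a b d)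
    (s3 : ∀ a b d : T, c b d a = c a b d) (s4 : ∀ a b d : T, c d a b = c a b d)
    (s5 : ∀ a b d : T, c d b a = c a b d)
    (hdeg : ∀ a b : T, c a b b = b) (hdeg2 : ∀ a b : T, c a b a = a)
    (hdeg3 : ∀ a b : T, c a a b = a)
    (hid1 : ∀ a b d : T, c a b (c a b d) = c a b d)
    (hid2 : ∀ a b d : T, c a d (c a b d) = c a b d)
    (hid3 : ∀ a b d : T, c b d (c a b d) = c a b d)
    (h4 : ∀ a b d e : T, c a b d = c a b e ∨ c a b d = c a d e ∨ c a b d = c b d e)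
    (x y z v w : T)
    (f0 : (c x y z) = z) (f1 : (c w x y) = v) (f2 : (c v x y) = v) : (c v w z) = v := by
  rcases h4 x y w z with h0 | h0 | h0
  · rw [s3 w x y] at h0
    rw [← f0, ← h0, f1, hdeg2 v w]
  · rw [s3 w x y] at h0
    rw [s1 w x z] at h0
    rw [← f1, h0, s4 w z (c w x z), hid2 w x z]
  · rw [s3 w x y] at h0
    rw [s1 w y z] at h0
    rw [← f1, h0, s4 w z (c w y z), hid2 w y z]

variable {T : Type*}

theorem stmt_19 [Nonempty T] (c : T → T → T → T) (hc : IsAlgTree c)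
    (ν : @MeasureTheory.Measure T (@borel T (componentTopology c)))
    (hfin : ∀ x y : T, ν (interval c x y) < ⊤) :
    let r : T → T → ℝ := fun x y =>
      (ν (interval c x y)).toReal - (ν {x}).toReal / 2 - (ν {y}).toReal / 2
    (∀ x, r x x = 0) ∧ (∀ x y, r x y = r y x) ∧
    (∀ x y z, r x z ≤ r x y + r y z) ∧
    (∀ x y z, r x y + r y z = r x z + 2 * r (c x y z) y) := by
  obtain ⟨h12, h23, hdeg, hid1, h4⟩ := hc
  have s1 : ∀ a b d : T, c b a d = c a b d := fun a b d => (h12 a b d).symm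
  have s2 : ∀ a b d : T, c a d b = c a b d := fun a b d => h23 a d b
  have s3 : ∀ a b d : T, c b d a = c a b d := fun a b d => (h23 b d a).trans (s1 a b d)
  have s4 : ∀ a b d : T, c d a b = c a b d := fun a b d => (h12 d a b).trans (s2 a b d)
  have s5 : ∀ a b d : T, c d b a = c a b d := fun a b d => (h12 d b a).trans (s3 a b d)
  have hdeg2 : ∀ a b : T, c a b a = a := fun a b => (h12 a b a).trans (hdeg b a)
  have hdeg3 : ∀ a b : T, c a a b = a := fun a b => (h23 a a b).trans (hdeg2 a b)
  have hid2 : ∀ a b d : T, c a d (c a b d) = c a b d := fun a b d => by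
    rw [← s2 a b d]; exact hid1 a d b
  have hid3 : ∀ a b d : T, c b d (c a b d) = c a b d := fun a b d => by
    rw [← s3 a b d]; exact hid1 b d a
  have bp1 : ∀ x y z : T, c (c x y z) x z = c x y z := fun x y z =>
    algF3 c s1 s2 s3 s4 s5 hdeg hdeg2 hdeg3 hid1 hid2 hid3 h4 x y z _ rfl
  have bp2 : ∀ x y z : T, c (c x y z) y z = c x y z := fun x y z =>
    algF3 c s1 s2 s3 s4 s5 hdeg hdeg2 hdeg3 hid1 hid2 hid3 h4 y x z _ (s1 x y z)
  have bp3 : ∀ x y z : T, c (c x y z) x y = c x y z := fun x y z =>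
    algF3 c s1 s2 s3 s4 s5 hdeg hdeg2 hdeg3 hid1 hid2 hid3 h4 x z y _ (s2 x y z)
  have int_comm : ∀ x y : T, interval c x y = interval c y x := fun x y =>
    Set.ext fun w => by simp only [interval, Set.mem_setOf_eq]; rw [s1 x y w]
  have int_self : ∀ x : T, interval c x x = {x} := fun x => Set.ext fun w => by
    simp only [interval, Set.mem_setOf_eq, Set.mem_singleton_iff]
    constructor
    · intro h; rw [← h]; exact hdeg3 x w
    · intro h; rw [h]; exact hdeg x x
  have memL : ∀ x y : T, x ∈ interval c x y := fun x y => hdeg2 x y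
  have memR : ∀ x y : T, y ∈ interval c x y := fun x y => hdeg x y
  have hABi : ∀ x y z : T,
      interval c x y ∩ interval c y z = interval c (c x y z) y := by
    intro x y z
    ext w
    simp only [interval, Set.mem_inter_iff, Set.mem_setOf_eq]
    constructor
    · rintro ⟨h1, h2⟩
      have := algP4fwd c s1 s2 s3 s4 s5 hdeg hdeg2 hdeg3 hid1 hid2 hid3 h4 x y z
        (c x y z) w rfl ((s4 x y w).trans h1) ((s4 y z w).trans h2)
      exact (s2 (c x y z) y w).symm.trans this
    · intro h
      have hf4 : c (c x y z) w y = w := (s2 (c x y z) y w).trans h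
      constructor
      · have := algP4bwd1 c s1 s2 s3 s4 s5 hdeg hdeg2 hdeg3 hid1 hid2 hid3 h4 x y z
          (c x y z) w rfl (bp1 x y z) (bp2 x y z) (bp3 x y z) hf4
        exact (s4 x y w).symm.trans this
      · have := algP4bwd2 c s1 s2 s3 s4 s5 hdeg hdeg2 hdeg3 hid1 hid2 hid3 h4 x y z
          (c x y z) w rfl (bp1 x y z) (bp2 x y z) (bp3 x y z) hf4
        exact (s4 y z w).symm.trans this
  have hABu : ∀ x y z : T,
      interval c x y ∪ interval c y z = interval c x z ∪ interval c (c x y z) y := by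
    intro x y z
    ext w
    simp only [interval, Set.mem_union, Set.mem_setOf_eq]
    constructor
    · rintro (h | h)
      · rcases algP5a c s1 s2 s3 s4 s5 hdeg hdeg2 hdeg3 hid1 hid2 hid3 h4 x y z
          (c x y z) w rfl (bp1 x y z) (bp2 x y z) (bp3 x y z) ((s4 x y w).trans h) with h' | h'
        · exact Or.inl ((s4 x z w).symm.trans h')
        · exact Or.inr ((s2 (c x y z) y w).symm.trans h')
      · rcases algP5b c s1 s2 s3 s4 s5 hdeg hdeg2 hdeg3 hid1 hid2 hid3 h4 x y z
          (c x y z) w rfl (bp1 x y z) (bp2 x y z) (bp3 x y z) ((s4 y z w).trans h) with h' | h'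
        · exact Or.inl ((s4 x z w).symm.trans h')
        · exact Or.inr ((s2 (c x y z) y w).symm.trans h')
    · rintro (h | h)
      · rcases algP5rev c s1 s2 s3 s4 s5 hdeg hdeg2 hdeg3 hid1 hid2 hid3 h4 x y z
          (c x y z) w rfl (bp1 x y z) (bp2 x y z) (bp3 x y z) ((s4 x z w).trans h) with h' | h'
        · exact Or.inl ((s4 x y w).symm.trans h')
        · exact Or.inr ((s4 y z w).symm.trans h')
      · have hf4 : c (c x y z) w y = w := (s2 (c x y z) y w).trans h
        have := algP4bwd1 c s1 s2 s3 s4 s5 hdeg hdeg2 hdeg3 hid1 hid2 hid3 h4 x y z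
          (c x y z) w rfl (bp1 x y z) (bp2 x y z) (bp3 x y z) hf4
        exact Or.inl ((s4 x y w).symm.trans this)
  have hCDi : ∀ x y z : T,
      interval c x z ∩ interval c (c x y z) y = {c x y z} := by
    intro x y z
    ext w
    simp only [interval, Set.mem_inter_iff, Set.mem_setOf_eq, Set.mem_singleton_iff]
    constructor
    · rintro ⟨h1, h2⟩
      exact algP6 c s1 s2 s3 s4 s5 hdeg hdeg2 hdeg3 hid1 hid2 hid3 h4 x y z
        (c x y z) w rfl (bp1 x y z) (bp2 x y z) (bp3 x y z) ((s4 x z w).trans h1)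
        ((s2 (c x y z) y w).trans h2)
    · intro h
      subst h
      exact ⟨(s4 x z (c x y z)).symm.trans (bp1 x y z), hdeg2 (c x y z) y⟩
  letI : TopologicalSpace T := componentTopology c
  letI : MeasurableSpace T := borel T
  haveI : BorelSpace T := ⟨rfl⟩
  have hSopen : ∀ a b : T, a ≠ b → IsOpen (component c a b) := fun a b hab =>
    TopologicalSpace.isOpen_generateFrom_of_mem ⟨a, b, hab, rfl⟩
  have hms_single : ∀ x : T, MeasurableSet ({x} : Set T) := by
    intro x
    refine (isOpen_compl_iff.mp ?_).measurableSet
    have hcov : ({x}ᶜ : Set T) = ⋃ y ∈ ({x}ᶜ : Set T), component c x y := by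
      ext z
      simp only [Set.mem_compl_iff, Set.mem_singleton_iff, Set.mem_iUnion, exists_prop,
        component, Set.mem_setOf_eq, ne_eq]
      constructor
      · intro hz
        exact ⟨z, hz, hz, by rw [hdeg x z]; exact hz⟩
      · rintro ⟨y, hy, hz, -⟩; exact hz
    rw [hcov]
    exact isOpen_biUnion fun y hy => hSopen x y (Ne.symm hy)
  have hms_int : ∀ x y : T, MeasurableSet (interval c x y) := by
    intro x y
    refine (isOpen_compl_iff.mp ?_).measurableSet
    have hcov : (interval c x y)ᶜ = ⋃ w ∈ (interval c x y)ᶜ, component c (c x y w) w := by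
      ext z
      simp only [Set.mem_compl_iff, interval, Set.mem_setOf_eq, Set.mem_iUnion, exists_prop,
        component, ne_eq]
      constructor
      · intro hz
        refine ⟨z, hz, fun h => hz h.symm, ?_⟩
        rw [hdeg (c x y z) z]
        exact fun h => hz h.symm
      · rintro ⟨w, hw, hz1, hz2⟩
        intro hzint
        exact hz2 (algP7 c s1 s2 s3 s4 s5 hdeg hdeg2 hdeg3 hid1 hid2 hid3 h4 x y z
          (c x y w) w hzint (s4 x y w) (bp3 x y w))
    rw [hcov]
    exact isOpen_biUnion fun w hw => hSopen _ w hw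
  have hfi : ∀ x y : T, ν (interval c x y) ≠ ⊤ := fun x y => (hfin x y).ne
  have hfs : ∀ x : T, ν {x} ≠ ⊤ := fun x =>
    (lt_of_le_of_lt (MeasureTheory.measure_mono (by rw [int_self x])) (hfin x x)).ne
  have key : ∀ x y z : T, ν (interval c x y) + ν (interval c y z) + ν {c x y z}
      = ν (interval c x z) + 2 * ν (interval c (c x y z) y) := by
    intro x y z
    have E1 := MeasureTheory.measure_union_add_inter (μ := ν) (interval c x y) (hms_int y z)
    have E2 := MeasureTheory.measure_union_add_inter (μ := ν) (interval c x z)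
      (hms_int (c x y z) y)
    rw [hABi x y z, hABu x y z] at E1
    rw [hCDi x y z] at E2
    have E3 : ν (interval c x z ∪ interval c (c x y z) y) + ν (interval c (c x y z) y)
        + ν {c x y z}
        = (ν (interval c x z ∪ interval c (c x y z) y) + ν {c x y z})
          + ν (interval c (c x y z) y) := by ring
    rw [← E1, E3, E2]
    ring
  have keyR : ∀ x y z : T, (ν (interval c x y)).toReal + (ν (interval c y z)).toReal
      + (ν {c x y z}).toReal
      = (ν (interval c x z)).toReal + 2 * (ν (interval c (c x y z) y)).toReal := by
    intro x y z
    have h := congrArg ENNReal.toReal (key x y z)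
    rw [ENNReal.toReal_add (ENNReal.add_ne_top.mpr ⟨hfi x y, hfi y z⟩) (hfs _),
      ENNReal.toReal_add (hfi x y) (hfi y z),
      ENNReal.toReal_add (hfi x z) (ENNReal.mul_ne_top (by simp) (hfi (c x y z) y)),
      ENNReal.toReal_mul] at h
    simpa using h
  have rnn : ∀ x y : T,
      0 ≤ (ν (interval c x y)).toReal - (ν {x}).toReal / 2 - (ν {y}).toReal / 2 := by
    intro x y
    by_cases hxy : x = y
    · subst hxy
      rw [int_self x]
      have := ENNReal.toReal_nonneg (a := ν {x})
      linarith
    · have hsub : ({x} : Set T) ∪ {y} ⊆ interval c x y :=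
        Set.union_subset (Set.singleton_subset_iff.mpr (memL x y))
          (Set.singleton_subset_iff.mpr (memR x y))
      have hmu : ν {x} + ν {y} ≤ ν (interval c x y) := by
        rw [← MeasureTheory.measure_union (Set.disjoint_singleton.mpr hxy) (hms_single y)]
        exact MeasureTheory.measure_mono hsub
      have h2 : (ν {x}).toReal + (ν {y}).toReal ≤ (ν (interval c x y)).toReal := by
        rw [← ENNReal.toReal_add (hfs x) (hfs y)]
        exact ENNReal.toReal_mono (hfi x y) hmu
      have n1 := ENNReal.toReal_nonneg (a := ν {x})
      have n2 := ENNReal.toReal_nonneg (a := ν {y})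
      linarith
  intro r
  have rnn' : ∀ x y : T, 0 ≤ r x y := rnn
  have req : ∀ x y z : T, r x y + r y z = r x z + 2 * r (c x y z) y := by
    intro x y z
    show (ν (interval c x y)).toReal - (ν {x}).toReal / 2 - (ν {y}).toReal / 2
        + ((ν (interval c y z)).toReal - (ν {y}).toReal / 2 - (ν {z}).toReal / 2)
      = (ν (interval c x z)).toReal - (ν {x}).toReal / 2 - (ν {z}).toReal / 2
        + 2 * ((ν (interval c (c x y z) y)).toReal - (ν {c x y z}).toReal / 2
          - (ν {y}).toReal / 2)
    have h := keyR x y z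
    linarith
  refine ⟨?_, ?_, ?_, req⟩
  · intro x
    show (ν (interval c x x)).toReal - (ν {x}).toReal / 2 - (ν {x}).toReal / 2 = 0
    rw [int_self x]
    ring
  · intro x y
    show (ν (interval c x y)).toReal - (ν {x}).toReal / 2 - (ν {y}).toReal / 2
      = (ν (interval c y x)).toReal - (ν {y}).toReal / 2 - (ν {x}).toReal / 2
    rw [int_comm x y]
    ring
  · intro x y z
    have h := req x y z
    have h2 := rnn' (c x y z) y
    linarith
end
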